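/- arXiv:1911.00113 — 6 statements merged into one kernel-verified Lean document; each statement's English description precedes it below -/
import Mathlib

section
/- Let A₁ → A₂ → A₃ → ⋯ be a sequence of ring homomorphisms such that the induced maps Aₙ/pAₙ → Aₙ₊₁/pAₙ₊₁ are all injective, and each Aₙ is p-torsion free, p-adically separated, and totally integrally closed in Aₙ[1/p]. Then the direct limit A = colim Aₙ is p-torsion free and totally integrally closed in A[1/p]. -/
/-- `A` is totally integrally closed in `A[1/p]`: any element of `Localization.Away p`
whose powers all lie in a finitely generated `A`-submodule (equivalently in `p^{-N}·A`
for some `N`) comes from `A`. -/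
def TotallyIntegrallyClosedAwayP (p : ℕ) (A : Type*) [CommRing A] : Prop :=
  ∀ α : Localization.Away (p : A),
    (∃ N : ℕ, ∀ n : ℕ, ∃ a : A,
      algebraMap A (Localization.Away (p : A)) ((p : A) ^ N) * α ^ n =
        algebraMap A (Localization.Away (p : A)) a) →
    ∃ a : A, algebraMap A (Localization.Away (p : A)) a = α

/-- Iterated transition maps of a sequence of ring homomorphisms. -/
def iterTrans {A : ℕ → Type*} [∀ n, CommRing (A n)] (f : ∀ n, A n →+* A (n + 1)) :
    ∀ n m, A n →+* A (n + m)
  | _, 0 => RingHom.id _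
  | n, m + 1 => (f (n + m)).comp (iterTrans f n m)

/-- Cast ring hom along an equality of indices. -/
def castHom (A : ℕ → Type*) [∀ n, CommRing (A n)] : ∀ {n m : ℕ}, n = m → (A n →+* A m)
  | _, _, rfl => RingHom.id _

theorem g_castHom {A : ℕ → Type*} [∀ n, CommRing (A n)] {L : Type*} [CommRing L]
    (g : ∀ n, A n →+* L) {n m : ℕ} (h : n = m) (a : A n) :
    g m (castHom A h a) = g n a := by subst h; rfl

theorem g_iterTrans {A : ℕ → Type*} [∀ n, CommRing (A n)] {L : Type*} [CommRing L]
    (f : ∀ n, A n →+* A (n + 1)) (g : ∀ n, A n →+* L)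
    (hcomp : ∀ n, (g (n + 1)).comp (f n) = g n) (n m : ℕ) (a : A n) :
    g (n + m) (iterTrans f n m a) = g n a := by
  induction m with
  | zero => rfl
  | succ m ih =>
    have h1 : iterTrans f n (m + 1) a = f (n + m) (iterTrans f n m a) := rfl
    rw [h1]
    exact (RingHom.congr_fun (hcomp (n + m)) (iterTrans f n m a)).trans ih

/-- A single transition map is injective modulo `p^j`. -/
theorem fmodinj_pow {A : ℕ → Type*} [∀ n, CommRing (A n)] (p : ℕ)
    (f : ∀ n, A n →+* A (n + 1))
    (hmodinj : ∀ n (a : A n), (∃ c, f n a = (p : A (n + 1)) * c) →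
      ∃ c, a = (p : A n) * c)
    (htf : ∀ n (a : A n), (p : A n) * a = 0 → a = 0)
    (n j : ℕ) (a : A n) (h : ∃ c, f n a = (p : A (n + 1)) ^ j * c) :
    ∃ c, a = (p : A n) ^ j * c := by
  induction j generalizing a with
  | zero => exact ⟨a, by simp⟩
  | succ j ih =>
    obtain ⟨c, hc⟩ := h
    obtain ⟨a₁, ha₁⟩ := hmodinj n a ⟨(p : A (n + 1)) ^ j * c, by rw [hc]; ring⟩
    have h2 : f n a₁ = (p : A (n + 1)) ^ j * c := by
      have h3 : f n ((p : A n) * a₁) = f n a := by rw [← ha₁]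
      rw [map_mul, map_natCast, hc] at h3
      have h4 : (p : A (n + 1)) * (f n a₁ - (p : A (n + 1)) ^ j * c) = 0 := by
        rw [mul_sub, h3]; ring
      have := htf (n + 1) _ h4
      exact sub_eq_zero.mp this
    obtain ⟨c₁, hc₁⟩ := ih a₁ ⟨c, h2⟩
    exact ⟨c₁, by rw [ha₁, hc₁]; ring⟩

/-- Iterated transition maps are injective modulo `p^j`. -/
theorem itermodinj {A : ℕ → Type*} [∀ n, CommRing (A n)] (p : ℕ)
    (f : ∀ n, A n →+* A (n + 1))
    (hmodinj : ∀ n (a : A n), (∃ c, f n a = (p : A (n + 1)) * c) →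
      ∃ c, a = (p : A n) * c)
    (htf : ∀ n (a : A n), (p : A n) * a = 0 → a = 0)
    (n m j : ℕ) (a : A n) (h : ∃ c, iterTrans f n m a = (p : A (n + m)) ^ j * c) :
    ∃ c, a = (p : A n) ^ j * c := by
  induction m with
  | zero => exact h
  | succ m ih =>
    obtain ⟨c, hc⟩ := h
    have h1 : iterTrans f n (m + 1) a = f (n + m) (iterTrans f n m a) := rfl
    rw [h1] at hc
    exact ih (fmodinj_pow p f hmodinj htf (n + m) j _ ⟨c, hc⟩)

/-- a direct limit of p-torsion free, p-adically separated rings, each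
totally integrally closed in its `p`-localization, along maps which are injective
mod `p`, is again p-torsion free and totally integrally closed in its
`p`-localization. The colimit is axiomatized by a cocone `g : ∀ n, A n →+* L`
which is compatible, jointly surjective, and with the expected kernels. -/
theorem stmt_2 {A : ℕ → Type*} [∀ n, CommRing (A n)] (p : ℕ) (hp : p.Prime)
    (f : ∀ n, A n →+* A (n + 1))
    (hmodinj : ∀ n (a : A n), (∃ c, f n a = (p : A (n + 1)) * c) →
      ∃ c, a = (p : A n) * c)
    (htf : ∀ n (a : A n), (p : A n) * a = 0 → a = 0)
    (hsep : ∀ n (a : A n), (∀ k : ℕ, ∃ c, a = (p : A n) ^ k * c) → a = 0)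
    (htic : ∀ n, TotallyIntegrallyClosedAwayP p (A n))
    (L : Type*) [CommRing L] (g : ∀ n, A n →+* L)
    (hcomp : ∀ n, (g (n + 1)).comp (f n) = g n)
    (hsurj : ∀ x : L, ∃ n a, g n a = x)
    (hker : ∀ n (a : A n), g n a = 0 → ∃ m, iterTrans f n m a = 0) :
    (∀ x : L, (p : L) * x = 0 → x = 0) ∧ TotallyIntegrallyClosedAwayP p L := by
  have gcomm := g_iterTrans f g hcomp
  have itermod := itermodinj p f hmodinj htf
  -- p-torsion freeness of L
  have hptfL : ∀ x : L, (p : L) * x = 0 → x = 0 := by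
    intro x hx
    obtain ⟨n, a, rfl⟩ := hsurj x
    have h1 : g n ((p : A n) * a) = 0 := by rw [map_mul, map_natCast]; exact hx
    obtain ⟨m, hm⟩ := hker n _ h1
    rw [map_mul, map_natCast] at hm
    have h2 := htf (n + m) _ hm
    rw [← gcomm n m a, h2, map_zero]
  -- p^j-torsion freeness of L
  have hptfLpow : ∀ (j : ℕ) (x : L), (p : L) ^ j * x = 0 → x = 0 := by
    intro j
    induction j with
    | zero => intro x hx; simpa using hx
    | succ j ih =>
      intro x hx
      apply ih
      apply hptfL
      rw [← mul_assoc, mul_comm (p : L), ← pow_succ]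
      exact hx
  -- key lemma: if g m t is divisible by p^j in L, then t is divisible by p^j in A m
  have lemA : ∀ (m j : ℕ) (t : A m), (∃ x : L, g m t = (p : L) ^ j * x) →
      ∃ t', t = (p : A m) ^ j * t' := by
    intro m j t hx
    obtain ⟨x, hx⟩ := hx
    obtain ⟨s, u, rfl⟩ := hsurj x
    set t₁ := iterTrans f m s t with ht₁
    set u₁ := castHom A (Nat.add_comm s m) (iterTrans f s m u) with hu₁
    have h1 : g (m + s) t₁ = g m t := gcomm m s t
    have h2 : g (m + s) u₁ = g s u := by
      rw [hu₁, g_castHom g (Nat.add_comm s m)]; exact gcomm s m u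
    have h0 : g (m + s) (t₁ - (p : A (m + s)) ^ j * u₁) = 0 := by
      rw [map_sub, map_mul, map_pow, map_natCast, h1, h2, hx]; ring
    obtain ⟨m', hm'⟩ := hker _ _ h0
    rw [map_sub, map_mul, map_pow, map_natCast, sub_eq_zero] at hm'
    have h3 := itermod (m + s) m' j t₁ ⟨_, hm'⟩
    exact itermod m s j t h3
  refine ⟨hptfL, ?_⟩
  intro α hα
  obtain ⟨N, hN⟩ := hα
  -- the localization map on L is injective and powers of p map to units
  have hle : Submonoid.powers (p : L) ≤ nonZeroDivisors L := by
    intro y hy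
    obtain ⟨k, rfl⟩ := hy
    rw [mem_nonZeroDivisors_iff_right]
    intro x hx
    exact hptfLpow k x (by rw [mul_comm]; exact hx)
  have hinj : Function.Injective (algebraMap L (Localization.Away (p : L))) :=
    IsLocalization.injective _ hle
  have hunit : ∀ k : ℕ, IsUnit (algebraMap L (Localization.Away (p : L)) ((p : L) ^ k)) :=
    fun k => IsLocalization.map_units (Localization.Away (p : L))
      (⟨(p : L) ^ k, ⟨k, rfl⟩⟩ : Submonoid.powers (p : L))
  obtain ⟨⟨a, s⟩, hs⟩ := IsLocalization.surj (Submonoid.powers (p : L)) α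
  obtain ⟨k, hk⟩ := s.2
  have hs' : α * algebraMap L (Localization.Away (p : L)) ((p : L) ^ k) =
      algebraMap L (Localization.Away (p : L)) a := by
    have hk' : (p : L) ^ k = (s : L) := hk
    rw [hk']; exact hs
  -- divisibility of powers in L
  have hdiv : ∀ n : ℕ, ∃ b : L, (p : L) ^ N * a ^ n = (p : L) ^ (k * n) * b := by
    intro n
    obtain ⟨b, hb⟩ := hN n
    refine ⟨b, hinj ?_⟩
    have h1 : (algebraMap L (Localization.Away (p : L)) a) ^ n =
        α ^ n * algebraMap L (Localization.Away (p : L)) ((p : L) ^ (k * n)) := by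
      rw [← hs', mul_pow, ← map_pow, ← pow_mul]
    rw [map_mul, map_mul, map_pow (algebraMap L (Localization.Away (p : L))) a n, h1, ← hb]
    ring
  obtain ⟨m, a₀, ha₀⟩ := hsurj a
  have hc : ∀ n : ℕ, ∃ c : A m, (p : A m) ^ N * a₀ ^ n = (p : A m) ^ (k * n) * c := by
    intro n
    obtain ⟨b, hb⟩ := hdiv n
    apply lemA m (k * n)
    refine ⟨b, ?_⟩
    rw [map_mul, map_pow, map_pow, map_natCast, ha₀]
    exact hb
  choose c hcs using hc
  -- now work in A m
  have hinjm : Function.Injective (algebraMap (A m) (Localization.Away (p : A m))) := by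
    apply IsLocalization.injective _ (M := Submonoid.powers (p : A m))
    intro y hy
    obtain ⟨j, rfl⟩ := hy
    rw [mem_nonZeroDivisors_iff_right]
    intro x hx
    have hpow : ∀ (j : ℕ) (x : A m), (p : A m) ^ j * x = 0 → x = 0 := by
      intro j
      induction j with
      | zero => intro x hx; simpa using hx
      | succ j ih =>
        intro x hx
        apply ih
        apply htf m
        rw [← mul_assoc, mul_comm (p : A m), ← pow_succ]
        exact hx
    exact hpow j x (by rw [mul_comm]; exact hx)
  have hunitm : ∀ j : ℕ, IsUnit (algebraMap (A m) (Localization.Away (p : A m))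
      ((p : A m) ^ j)) :=
    fun j => IsLocalization.map_units (Localization.Away (p : A m))
      (⟨(p : A m) ^ j, ⟨j, rfl⟩⟩ : Submonoid.powers (p : A m))
  set ιm := algebraMap (A m) (Localization.Away (p : A m)) with hιm
  set β : Localization.Away (p : A m) := ((hunitm k).unit⁻¹ : _) * ιm a₀ with hβdef
  have hβ : ιm ((p : A m) ^ k) * β = ιm a₀ := by
    rw [hβdef, ← mul_assoc, (hunitm k).mul_val_inv, one_mul]
  have hticHyp : ∀ n : ℕ, ιm ((p : A m) ^ N) * β ^ n = ιm (c n) := by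
    intro n
    apply (hunitm (k * n)).mul_left_cancel
    have h2 : (ιm a₀) ^ n = ιm ((p : A m) ^ (k * n)) * β ^ n := by
      rw [← hβ, mul_pow, ← map_pow, ← pow_mul]
    calc ιm ((p : A m) ^ (k * n)) * (ιm ((p : A m) ^ N) * β ^ n)
        = ιm ((p : A m) ^ N) * (ιm ((p : A m) ^ (k * n)) * β ^ n) := by ring
      _ = ιm ((p : A m) ^ N) * (ιm a₀) ^ n := by rw [← h2]
      _ = ιm ((p : A m) ^ N * a₀ ^ n) := by simp only [map_mul, map_pow]
      _ = ιm ((p : A m) ^ (k * n) * c n) := by rw [hcs n]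
      _ = ιm ((p : A m) ^ (k * n)) * ιm (c n) := by rw [map_mul]
  obtain ⟨c', hc'⟩ := htic m β ⟨N, fun n => ⟨c n, hticHyp n⟩⟩
  have haAm : a₀ = (p : A m) ^ k * c' := by
    apply hinjm
    rw [map_mul, hc', hβ]
  have haL : a = (p : L) ^ k * g m c' := by
    rw [← ha₀, haAm, map_mul, map_pow, map_natCast]
  refine ⟨g m c', ?_⟩
  apply (hunit k).mul_left_cancel
  rw [← map_mul, ← haL, ← hs']
  ring
end

section
/- Let A be an R-algebra that is p-torsion free and p-adically separated, with A/pA reduced. Let Aₘ = A ⊗_R R[p^{1/pᵐ}], where R[p^{1/pᵐ}] ≅ R[z]/(z^{pᵐ} − p). Then Aₘ is p-torsion free, p-adically separated, and totally integrally closed in Aₘ[1/p]. -/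
/-- Abstract key lemma: if `B` contains an element `z` with `z ^ q = p`, `z` is a
nonzerodivisor, and "`a ^ n ∈ zB` implies `a ∈ zB`", then `B` is totally integrally
closed away from `p`. -/
theorem aux_tic (p q : ℕ) (hq : 0 < q) (B : Type*) [CommRing B] (z : B)
    (hz : z ^ q = (p : B))
    (hztf : ∀ x : B, z * x = 0 → x = 0)
    (hred : ∀ a : B, ∀ n : ℕ, 0 < n → (∃ b, a ^ n = z * b) → ∃ c, a = z * c) :
    TotallyIntegrallyClosedAwayP p B := by
  intro α hα
  obtain ⟨N, hN⟩ := hα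
  set ι := algebraMap B (Localization.Away (p : B)) with hι
  -- powers of z are nonzerodivisors
  have hzpow : ∀ k : ℕ, ∀ x : B, z ^ k * x = 0 → x = 0 := by
    intro k
    induction k with
    | zero => intro x hx; simpa using hx
    | succ k ih =>
      intro x hx
      refine ih x (hztf _ ?_)
      rw [← hx]; ring
  -- p-powers are nonzerodivisors
  have hppow : Submonoid.powers (p : B) ≤ nonZeroDivisors B := by
    intro s hs
    obtain ⟨k, rfl⟩ := hs
    rw [mem_nonZeroDivisors_iff_right]
    intro x hx
    refine hzpow (q * k) x ?_
    rw [pow_mul, hz]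
    rw [mul_comm] at hx
    exact hx
  have hinj : Function.Injective ι := IsLocalization.injective (Localization.Away (p : B)) hppow
  -- ι z is a unit
  have hup : IsUnit (ι ((p : B))) :=
    IsLocalization.map_units (Localization.Away (p : B)) ⟨(p : B), Submonoid.mem_powers _⟩
  have huz : IsUnit (ι z) := by
    refine (isUnit_pow_iff hq.ne').mp ?_
    rw [← map_pow, hz]
    exact hup
  -- key induction
  have key : ∀ j : ℕ, ∀ a : B, (ι z) ^ j * α = ι a → ∃ b : B, ι b = α := by
    intro j
    induction j with
    | zero => intro a h; exact ⟨a, by simpa using h.symm⟩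
    | succ j ih =>
      intro a h
      have hdiv : ∃ a', a = z * a' := by
        set n := q * N + 1 with hn
        refine hred a n (by omega) ?_
        obtain ⟨aN, haN⟩ := hN n
        have e2 : (ι z) ^ (q * N) * α ^ n = ι aN := by
          have h1 : (ι z) ^ (q * N) = ι ((p : B) ^ N) := by
            rw [← map_pow, pow_mul, hz]
          rw [h1]
          exact haN
        set e := (j + 1) * n - (q * N) - 1 with he
        have hE : (j + 1) * n = q * N + 1 + e := by
          have h2 : n ≤ (j + 1) * n := Nat.le_mul_of_pos_left n (by omega)
          omega
        have e1 : ι (a ^ n) = ι (z * (z ^ e * aN)) := by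
          rw [map_pow, ← h, mul_pow, ← pow_mul, hE]
          rw [map_mul, map_mul, map_pow]
          calc (ι z) ^ (q * N + 1 + e) * α ^ n
              = (ι z) * ((ι z) ^ e * ((ι z) ^ (q * N) * α ^ n)) := by ring
            _ = ι z * ((ι z) ^ e * ι aN) := by rw [e2]
        exact ⟨z ^ e * aN, hinj e1⟩
      obtain ⟨a', rfl⟩ := hdiv
      refine ih a' ?_
      rw [map_mul] at h
      have : ι z * ((ι z) ^ j * α) = ι z * ι a' := by
        rw [← h]; ring
      exact huz.mul_left_cancel this
  obtain ⟨⟨b, s⟩, hbs⟩ := IsLocalization.surj (Submonoid.powers (p : B)) α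
  obtain ⟨k, hk⟩ := s.2
  have : (ι z) ^ (q * k) * α = ι b := by
    have hk' : (p : B) ^ k = (s : B) := hk
    have h3 : (ι z) ^ (q * k) = ι ((s : B)) := by
      rw [← map_pow, pow_mul, hz, hk']
    rw [h3, mul_comm]
    exact hbs
  obtain ⟨c, hc⟩ := key (q * k) b this
  exact ⟨c, hc⟩

/-- Let `R` be a complete DVR with maximal ideal `(p)`, `p` an odd prime,
and algebraically closed residue field. Let `A` be an `R`-algebra which is p-torsion
free and p-adically separated with `A/pA` reduced. Then
`A_m = A ⊗_R R[p^{1/p^m}] ≅ A[z]/(z^{p^m} - p)` is p-torsion free, p-adically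
separated, and totally integrally closed in `A_m[1/p]`. -/
theorem stmt_4 (p : ℕ) (hp : p.Prime) (hodd : p ≠ 2)
    (R : Type*) [CommRing R] [IsDomain R] [IsDiscreteValuationRing R]
    (hirr : Irreducible (p : R)) (hcompl : IsAdicComplete (Ideal.span {(p : R)}) R)
    [IsAlgClosed (IsLocalRing.ResidueField R)]
    (A : Type*) [CommRing A] [Algebra R A]
    (htf : ∀ a : A, (p : A) * a = 0 → a = 0)
    (hsep : ∀ a : A, (∀ n : ℕ, ∃ c : A, a = (p : A) ^ n * c) → a = 0)
    (hred : IsReduced (A ⧸ Ideal.span {(p : A)}))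
    (m : ℕ) :
    let Am := AdjoinRoot ((Polynomial.X : Polynomial A) ^ p ^ m - Polynomial.C (p : A))
    (∀ a : Am, (p : Am) * a = 0 → a = 0) ∧
    (∀ a : Am, (∀ n : ℕ, ∃ c : Am, a = (p : Am) ^ n * c) → a = 0) ∧
    TotallyIntegrallyClosedAwayP p Am := by
  intro Am
  set q := p ^ m with hqdef
  have hq : 0 < q := Nat.pow_pos (n := m) hp.pos
  set f : Polynomial A := Polynomial.X ^ q - Polynomial.C (p : A) with hf
  have hmonic : f.Monic := Polynomial.monic_X_pow_sub_C _ hq.ne'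
  set z : Am := AdjoinRoot.root f with hzdef
  -- z ^ q = p
  have hz : z ^ q = (p : Am) := by
    have h0 : AdjoinRoot.mk f f = 0 := AdjoinRoot.mk_self
    rw [hf] at h0
    rw [map_sub, map_pow, AdjoinRoot.mk_X, AdjoinRoot.mk_C, sub_eq_zero] at h0
    rw [hzdef, h0]
    simp [AdjoinRoot.algebraMap_eq, map_natCast]
  -- power basis
  set pb := AdjoinRoot.powerBasis' hmonic with hpb
  have hmapp : (algebraMap A Am) ((p : A)) = (p : Am) := map_natCast _ p
  have hcast : ∀ x : Am, (p : Am) * x = (p : A) • x := by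
    intro x
    rw [Algebra.smul_def, hmapp]
  -- p-torsion free
  have htf' : ∀ x : Am, (p : Am) * x = 0 → x = 0 := by
    intro x hx
    rw [hcast] at hx
    have hrepr : ∀ i, pb.basis.repr x i = 0 := by
      intro i
      have : pb.basis.repr ((p : A) • x) i = 0 := by rw [hx]; simp
      rw [map_smul] at this
      simp only [Finsupp.smul_apply, smul_eq_mul] at this
      exact htf _ this
    have : pb.basis.repr x = 0 := Finsupp.ext hrepr
    exact (LinearEquiv.map_eq_zero_iff _).mp this
  -- z-torsion free
  have hztf : ∀ x : Am, z * x = 0 → x = 0 := by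
    intro x hx
    refine htf' x ?_
    rw [← hz]
    calc z ^ q * x = z ^ (q - 1) * (z * x) := by
          rw [← mul_assoc, ← pow_succ, Nat.sub_add_cancel hq]
      _ = 0 := by rw [hx, mul_zero]
  -- p-adically separated
  have hsep' : ∀ x : Am, (∀ n : ℕ, ∃ c : Am, x = (p : Am) ^ n * c) → x = 0 := by
    intro x hx
    have hrepr : ∀ i, pb.basis.repr x i = 0 := by
      intro i
      refine hsep _ (fun n => ?_)
      obtain ⟨c, hc⟩ := hx n
      have : x = ((p : A) ^ n) • c := by
        rw [hc, Algebra.smul_def, map_pow, hmapp]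
      refine ⟨pb.basis.repr c i, ?_⟩
      rw [this, map_smul]
      simp
    have : pb.basis.repr x = 0 := Finsupp.ext hrepr
    exact (LinearEquiv.map_eq_zero_iff _).mp this
  -- reduction mod z
  have hred' : ∀ a : Am, ∀ n : ℕ, 0 < n → (∃ b, a ^ n = z * b) → ∃ c, a = z * c := by
    set Q := A ⧸ Ideal.span {(p : A)} with hQ
    set π : A →+* Q := Ideal.Quotient.mk _ with hπ
    have hπp : π (p : A) = 0 :=
      Ideal.Quotient.eq_zero_iff_mem.mpr (Ideal.mem_span_singleton_self _)
    have hpQ : (p : Q) = 0 := by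
      rw [← map_natCast π p]; exact hπp
    have h0 : Polynomial.eval₂ π 0 f = 0 := by
      rw [hf]
      simp [Polynomial.eval₂_sub, hπp, hpQ, zero_pow hq.ne']
    set φ : Am →+* Q := AdjoinRoot.lift π 0 h0 with hφ
    have hφz : φ z = 0 := AdjoinRoot.lift_root h0
    -- kernel of φ is zAm
    have hker : ∀ a : Am, φ a = 0 → ∃ c, a = z * c := by
      intro a ha
      obtain ⟨g, rfl⟩ := AdjoinRoot.mk_surjective a
      have hφg : φ (AdjoinRoot.mk f g) = π (g.coeff 0) := by
        rw [hφ, AdjoinRoot.lift_mk, Polynomial.eval₂_at_zero]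
      rw [hφg] at ha
      have : g.coeff 0 ∈ Ideal.span {(p : A)} := Ideal.Quotient.eq_zero_iff_mem.mp ha
      obtain ⟨d, hd⟩ := Ideal.mem_span_singleton'.mp this
      -- g = (g - C (g.coeff 0)) + C (g.coeff 0), first is X * h
      have hXdvd : Polynomial.X ∣ (g - Polynomial.C (g.coeff 0)) := by
        rw [Polynomial.X_dvd_iff]
        simp
      obtain ⟨h, hh⟩ := hXdvd
      refine ⟨AdjoinRoot.mk f h + z ^ (q - 1) * AdjoinRoot.of f d, ?_⟩
      have hsplit : g = Polynomial.X * h + Polynomial.C (g.coeff 0) := by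
        rw [← hh]; ring
      have hzq : z * z ^ (q - 1) = (p : Am) := by
        rw [← pow_succ', Nat.sub_add_cancel hq, hz]
      have hofp : AdjoinRoot.of f (g.coeff 0) = AdjoinRoot.of f d * (p : Am) := by
        rw [← hd, map_mul, map_natCast]
      rw [hsplit, map_add, map_mul, AdjoinRoot.mk_X, AdjoinRoot.mk_C, hofp, ← hzq, ← hzdef]
      ring
    intro a n hn hb
    refine hker a ?_
    obtain ⟨b, hab⟩ := hb
    have : (φ a) ^ n = 0 := by
      rw [← map_pow, hab, map_mul, hφz, zero_mul]
    have : IsNilpotent (φ a) := ⟨n, this⟩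
    exact hred.eq_zero _ this
  exact ⟨htf', hsep', aux_tic p q hq Am z hz hztf hred'⟩
end

section
/- Let A be a p-torsion free p-adically separated ring with A/pA reduced, and let πₘ = p^{1/pᵐ} in Aₘ = A[z]/(z^{pᵐ} − p) (z ↦ πₘ). If α ∈ Aₘ[1/p] satisfies αⁿ ∈ (1/p^N)·Aₘ for all n ∈ ℕ and some fixed N, and α = a/πₘ^ν with a ∈ Aₘ ∖ πₘAₘ and ν ≥ 1, then a ∈ πₘAₘ, a contradiction; hence ν = 0 and α ∈ Aₘ. -/
open Polynomial

lemma aux_X_regular' {A : Type*} [CommRing A] (g : A[X]) (h : (X : A[X]) * g = 0) : g = 0 := by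
  ext n
  have := congrArg (fun t => Polynomial.coeff t (n+1)) h
  simpa [Polynomial.coeff_X_mul] using this

lemma aux_root_regular {A : Type*} [CommRing A] (p q : ℕ) (hq : 1 ≤ q)
    (htf : ∀ a : A, (p : A) * a = 0 → a = 0)
    (x : AdjoinRoot ((X : A[X]) ^ q - C (p : A)))
    (h : AdjoinRoot.root _ * x = 0) : x = 0 := by
  obtain ⟨g, rfl⟩ := AdjoinRoot.mk_surjective x
  rw [← AdjoinRoot.mk_X, ← map_mul, AdjoinRoot.mk_eq_zero] at h
  obtain ⟨h', hh⟩ := h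
  have hc0 : (p : A) * h'.coeff 0 = 0 := by
    have := congrArg (fun t => Polynomial.coeff t 0) hh
    simp only [mul_coeff_zero, coeff_X_zero, zero_mul, coeff_sub, coeff_X_pow, coeff_C_zero] at this
    rw [if_neg (by omega)] at this
    have : (0 - (p:A)) * h'.coeff 0 = 0 := this.symm
    linear_combination -this
  obtain ⟨h'', rfl⟩ := X_dvd_iff.2 (htf _ hc0)
  have : (X : A[X]) * (g - ((X : A[X]) ^ q - C (p : A)) * h'') = 0 := by
    rw [mul_sub]; rw [hh]; ring
  rw [AdjoinRoot.mk_eq_zero]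
  exact ⟨h'', sub_eq_zero.mp (aux_X_regular' _ this)⟩

section
variable {A : Type*} [CommRing A] (p q : ℕ)

lemma aux_eval0 (hq : 1 ≤ q) :
    ((X : A[X]) ^ q - C (p : A)).eval₂ (Ideal.Quotient.mk (Ideal.span {(p : A)})) 0 = 0 := by
  rw [eval₂_sub, eval₂_pow, eval₂_X, eval₂_C, zero_pow (by omega)]
  rw [zero_sub, neg_eq_zero, Ideal.Quotient.eq_zero_iff_mem]
  exact Ideal.mem_span_singleton_self _

noncomputable def aux_phi (hq : 1 ≤ q) :
    AdjoinRoot ((X : A[X]) ^ q - C (p : A)) →+* A ⧸ Ideal.span {(p : A)} :=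
  AdjoinRoot.lift (Ideal.Quotient.mk _) 0 (aux_eval0 p q hq)

lemma aux_phi_root (hq : 1 ≤ q) :
    aux_phi (A := A) p q hq (AdjoinRoot.root ((X : A[X]) ^ q - C (p : A))) = 0 :=
  AdjoinRoot.lift_root _

lemma aux_ker (hq : 1 ≤ q) (x : AdjoinRoot ((X : A[X]) ^ q - C (p : A)))
    (hx : aux_phi p q hq x = 0) : ∃ c, x = AdjoinRoot.root _ * c := by
  obtain ⟨g, rfl⟩ := AdjoinRoot.mk_surjective x
  rw [aux_phi, AdjoinRoot.lift_mk, eval₂_at_zero, Ideal.Quotient.eq_zero_iff_mem,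
    Ideal.mem_span_singleton] at hx
  obtain ⟨c, hc⟩ := hx
  obtain ⟨h, hh⟩ : (X : A[X]) ∣ (g - C (g.coeff 0)) := X_dvd_iff.2 (by simp)
  have h1 : AdjoinRoot.mk _ g =
      AdjoinRoot.root ((X : A[X]) ^ q - C (p : A)) * AdjoinRoot.mk _ h
        + (AdjoinRoot.root _) ^ q * AdjoinRoot.mk _ (C c) := by
    have hroot : (AdjoinRoot.root ((X : A[X]) ^ q - C (p : A))) ^ q
        = AdjoinRoot.mk _ (C (p : A)) := by
      have := AdjoinRoot.mk_self (f := (X : A[X]) ^ q - C (p : A))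
      rw [map_sub, map_pow, AdjoinRoot.mk_X, sub_eq_zero] at this
      exact this
    rw [hroot, ← AdjoinRoot.mk_X, ← map_mul, ← map_mul, ← map_add, ← map_mul]
    congr 1
    rw [← hh, hc]
    ring
  refine ⟨AdjoinRoot.mk _ h + (AdjoinRoot.root _) ^ (q - 1) * AdjoinRoot.mk _ (C c), ?_⟩
  rw [h1, mul_add, ← mul_assoc, ← pow_succ', Nat.sub_add_cancel hq]

lemma aux_pcast (hq : 1 ≤ q) :
    ((p : ℕ) : AdjoinRoot ((X : A[X]) ^ q - C (p : A))) = (AdjoinRoot.root _) ^ q := by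
  have h := AdjoinRoot.mk_self (f := (X : A[X]) ^ q - C (p : A))
  rw [map_sub, map_pow, AdjoinRoot.mk_X, sub_eq_zero] at h
  rw [h, Polynomial.C_eq_natCast, map_natCast]

end

/-- `A_m = A[z]/(z^{p^m} - p)`, the ring obtained by adjoining a `p^m`-th root of `p`. -/
abbrev AdjoinPthRootsOfP (p m : ℕ) (A : Type*) [CommRing A] : Type _ :=
  AdjoinRoot ((Polynomial.X : Polynomial A) ^ p ^ m - Polynomial.C (p : A))

/-- Let `A` be p-torsion free, p-adically separated, with `A/pA` reduced,
and let `π_m` be the class of `z` in `A_m = A[z]/(z^{p^m} - p)`. If `α ∈ A_m[1/p]`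
satisfies `α^n ∈ p^{-N}·A_m` for all `n`, and `α = a/π_m^ν` with `a ∉ π_m A_m` and
`ν ≥ 1`, then we reach a contradiction (so in fact `ν = 0` and `α ∈ A_m`, i.e. `A_m`
is totally integrally closed in `A_m[1/p]`). -/
theorem stmt_5 (p : ℕ) (hp : p.Prime) (hodd : p ≠ 2)
    (A : Type*) [CommRing A]
    (htf : ∀ a : A, (p : A) * a = 0 → a = 0)
    (hsep : ∀ a : A, (∀ n : ℕ, ∃ c : A, a = (p : A) ^ n * c) → a = 0)
    (hred : IsReduced (A ⧸ Ideal.span {(p : A)}))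
    (m : ℕ)
    (α : Localization.Away ((p : AdjoinPthRootsOfP p m A))) (N : ℕ)
    (hint : ∀ n : ℕ, ∃ b : AdjoinPthRootsOfP p m A,
      algebraMap (AdjoinPthRootsOfP p m A) (Localization.Away ((p : AdjoinPthRootsOfP p m A)))
          ((p : AdjoinPthRootsOfP p m A) ^ N) * α ^ n =
        algebraMap (AdjoinPthRootsOfP p m A) _ b)
    (a : AdjoinPthRootsOfP p m A) (ν : ℕ) (hν : 1 ≤ ν)
    (hrep : algebraMap (AdjoinPthRootsOfP p m A) (Localization.Away ((p : AdjoinPthRootsOfP p m A)))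
        ((AdjoinRoot.root _) ^ ν) * α =
      algebraMap (AdjoinPthRootsOfP p m A) _ a)
    (ha : ¬ ∃ c : AdjoinPthRootsOfP p m A, a = AdjoinRoot.root _ * c) :
    False := by
  have hq : 1 ≤ p ^ m := Nat.one_le_pow _ _ hp.pos
  set q := p ^ m with hqdef
  -- regularity of powers of the root
  have hreg : ∀ (k : ℕ) (x : AdjoinPthRootsOfP p m A),
      (AdjoinRoot.root _) ^ k * x = 0 → x = 0 := by
    intro k
    induction k with
    | zero => intro x hx; simpa using hx
    | succ k ih =>
        intro x hx
        refine aux_root_regular p q hq htf x (ih _ ?_)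
        rw [← hx]; ring
  have hpcast : ((p : ℕ) : AdjoinPthRootsOfP p m A) = (AdjoinRoot.root _) ^ q :=
    aux_pcast p q hq
  -- injectivity of the localization map
  have hinj : Function.Injective (algebraMap (AdjoinPthRootsOfP p m A)
      (Localization.Away ((p : AdjoinPthRootsOfP p m A)))) := by
    apply IsLocalization.injective (M := Submonoid.powers ((p : AdjoinPthRootsOfP p m A)))
    rintro x ⟨k, rfl⟩
    refine mem_nonZeroDivisors_iff_right.mpr ?_
    intro z hz
    refine hreg (q * k) z ?_
    rw [pow_mul, ← hpcast, mul_comm]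
    exact hz
  set n := q * N + 1 with hndef
  obtain ⟨b, hb⟩ := hint n
  have e2 : algebraMap (AdjoinPthRootsOfP p m A) (Localization.Away ((p : AdjoinPthRootsOfP p m A)))
      ((AdjoinRoot.root _) ^ (ν * n)) * α ^ n = algebraMap _ _ (a ^ n) := by
    rw [pow_mul, map_pow, ← mul_pow, hrep, ← map_pow]
  have h1 : algebraMap (AdjoinPthRootsOfP p m A) (Localization.Away ((p : AdjoinPthRootsOfP p m A)))
      ((AdjoinRoot.root _) ^ (ν * n) * b) = algebraMap _ _ ((p : AdjoinPthRootsOfP p m A) ^ N * a ^ n) := by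
    rw [map_mul, ← hb, map_mul, ← e2]
    ring
  have key : (AdjoinRoot.root _) ^ (ν * n) * b
      = (p : AdjoinPthRootsOfP p m A) ^ N * a ^ n := hinj h1
  rw [hpcast, ← pow_mul] at key
  have hle : q * N + 1 ≤ ν * n := by
    calc q * N + 1 = n := hndef.symm
    _ = 1 * n := (one_mul n).symm
    _ ≤ ν * n := Nat.mul_le_mul_right n hν
  set r := ν * n - (q * N + 1) with hrdef
  have hr : q * N + 1 + r = ν * n := by omega
  have hcomb : (AdjoinRoot.root _) ^ (q * N) *
      ((AdjoinRoot.root ((Polynomial.X : Polynomial A) ^ p ^ m - Polynomial.C (p : A))) *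
        ((AdjoinRoot.root _) ^ r * b)) = (AdjoinRoot.root _) ^ (ν * n) * b := by
    rw [← hr, pow_add, pow_add]
    ring
  have h2 : (AdjoinRoot.root _) ^ (q * N) *
      (a ^ n - AdjoinRoot.root _ * ((AdjoinRoot.root _) ^ r * b)) = 0 := by
    rw [mul_sub, hcomb, key, sub_self]
  have h3 : a ^ n = AdjoinRoot.root _ * ((AdjoinRoot.root _) ^ r * b) :=
    sub_eq_zero.mp (hreg _ _ h2)
  have hphi : aux_phi p q hq a ^ n = 0 := by
    rw [← map_pow, h3, map_mul, aux_phi_root, zero_mul]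
  have hz : aux_phi p q hq a = 0 := IsReduced.eq_zero _ ⟨n, hphi⟩
  exact ha (aux_ker p q hq a hz)
end

section
/- Let R be a p-adically complete discrete valuation ring with uniformizer p and let C be a p-adically complete p-torsion-free R-algebra with a Frobenius lift φ (a ring endomorphism with φ(x) ≡ xᵖ mod pC). Suppose (aₙ)_{n∈ℤ} is a sequence in R with aₙ → 0 p-adically as n → ±∞, and suppose in the ring obtained from C by inverting φ one has the identity (φ − p)(Σₙ aₙ φ^{−n}(z)) = p·z, where z is a fixed element whose φ-orbit is free. Then aₙ = pⁿ for n ≥ 1 and aₙ = 0 for n ≤ 0. -/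
/-- uniqueness of the cocharacter of `𝔾ₘ`.  `R` is a complete DVR with
uniformizer `p` and Frobenius lift `φ`; `D` plays the role of the (p-adically
complete, p-torsion free) ring obtained from `C` by inverting the Frobenius lift,
with induced automorphism `Φ`; `e n` represents `φ^{-n}(z)` (so `Φ (e n) = e (n-1)`,
and `e 0 = z`), and the orbit `(e n)` is (topologically) free: if the partial sums
`∑_{|n| ≤ M} c n • e n` of a p-adically decaying family of coefficients tend to `0`
p-adically, then all `c n = 0`.  If `(aₙ)` is a sequence in `R` tending to `0`
p-adically as `n → ±∞` and `S = Σₙ aₙ φ^{-n}(z)` satisfies `(Φ - p) S = p z`, then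
`aₙ = pⁿ` for `n ≥ 1` and `aₙ = 0` for `n ≤ 0`. -/
theorem stmt_8 (p : ℕ) (hp : p.Prime)
    (R : Type*) [CommRing R] [IsDomain R] [IsDiscreteValuationRing R]
    (hirr : Irreducible (p : R)) (hRcompl : IsAdicComplete (Ideal.span {(p : R)}) R)
    (φ : R ≃+* R) (hφ : ∀ x : R, ∃ c : R, φ x = x ^ p + (p : R) * c)
    (D : Type*) [CommRing D] [Algebra R D]
    (hDtf : ∀ d : D, (p : D) * d = 0 → d = 0)
    (hDcompl : IsAdicComplete (Ideal.span {(p : D)}) D)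
    (Φ : D ≃+* D)
    (hΦR : ∀ r : R, Φ (algebraMap R D r) = algebraMap R D (φ r))
    (hΦfrob : ∀ x : D, ∃ c : D, Φ x = x ^ p + (p : D) * c)
    (e : ℤ → D) (he : ∀ n : ℤ, Φ (e n) = e (n - 1))
    (hfree : ∀ c : ℤ → R,
      (∀ k : ℕ, ∃ N : ℕ, ∀ n : ℤ, (N : ℤ) ≤ |n| → ∃ r : R, c n = (p : R) ^ k * r) →
      (∀ k : ℕ, ∃ N : ℕ, ∀ M : ℕ, N ≤ M → ∃ d : D,
        ∑ n ∈ Finset.Icc (-(M : ℤ)) (M : ℤ), c n • e n = (p : D) ^ k * d) →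
      ∀ n : ℤ, c n = 0)
    (a : ℤ → R)
    (hconv : ∀ k : ℕ, ∃ N : ℕ, ∀ n : ℤ, (N : ℤ) ≤ |n| → ∃ r : R, a n = (p : R) ^ k * r)
    (S : D)
    (hS : ∀ k : ℕ, ∃ N : ℕ, ∀ M : ℕ, N ≤ M → ∃ d : D,
      S - ∑ n ∈ Finset.Icc (-(M : ℤ)) (M : ℤ), a n • e n = (p : D) ^ k * d)
    (heq : Φ S - (p : D) * S = (p : D) * e 0) :
    (∀ n : ℤ, 1 ≤ n → a n = (p : R) ^ n.toNat) ∧ (∀ n : ℤ, n ≤ 0 → a n = 0) := by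
  classical
  have hφp : φ ((p : ℕ) : R) = (p : R) := map_natCast φ p
  have hφpk : ∀ (k : ℕ) (r : R), φ ((p : R) ^ k * r) = (p : R) ^ k * φ r := by
    intro k r
    rw [map_mul, map_pow, hφp]
  set c : ℤ → R := fun n => φ (a (n + 1)) - (p : R) * a n - (if n = 0 then (p : R) else 0)
    with hcdef
  have hΦsmul : ∀ (r : R) (x : D), Φ (r • x) = φ r • Φ x := by
    intro r x
    rw [Algebra.smul_def, map_mul, hΦR, Algebra.smul_def]
  have hsmulpk : ∀ (k : ℕ) (r : R) (x : D), ((p : R) ^ k * r) • x = (p : D) ^ k * (r • x) := by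
    intro k r x
    rw [mul_smul, Algebra.smul_def, map_pow, map_natCast]
  have hsmulp : ∀ (r : R) (x : D), ((p : R) * r) • x = (p : D) * (r • x) := by
    intro r x
    have := hsmulpk 1 r x
    simpa using this
  -- key algebraic identity for partial sums
  have key : ∀ M : ℕ,
      ∑ n ∈ Finset.Icc (-(M : ℤ)) (M : ℤ), c n • e n
      = Φ (∑ n ∈ Finset.Icc (-(M : ℤ) - 1) ((M : ℤ) + 1), a n • e n)
        - (p : D) * (∑ n ∈ Finset.Icc (-(M : ℤ)) (M : ℤ), a n • e n)
        - (p : D) * e 0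
        - φ (a (-(M : ℤ) - 1)) • e (-(M : ℤ) - 2)
        - φ (a (-(M : ℤ))) • e (-(M : ℤ) - 1) := by
    intro M
    have hsplit : Finset.Icc (-(M : ℤ) - 1) ((M : ℤ) + 1)
        = insert (-(M : ℤ) - 1) (insert (-(M : ℤ)) (Finset.Icc (-(M : ℤ) + 1) ((M : ℤ) + 1))) := by
      ext x
      simp only [Finset.mem_Icc, Finset.mem_insert]
      omega
    have h1 : Φ (∑ n ∈ Finset.Icc (-(M : ℤ) - 1) ((M : ℤ) + 1), a n • e n)
        = φ (a (-(M : ℤ) - 1)) • e (-(M : ℤ) - 2) + φ (a (-(M : ℤ))) • e (-(M : ℤ) - 1)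
          + ∑ n ∈ Finset.Icc (-(M : ℤ)) (M : ℤ), φ (a (n + 1)) • e n := by
      rw [map_sum, hsplit, Finset.sum_insert (by simp only [Finset.mem_insert, Finset.mem_Icc]; omega),
        Finset.sum_insert (by simp only [Finset.mem_Icc]; omega)]
      have h2 : ∑ n ∈ Finset.Icc (-(M : ℤ) + 1) ((M : ℤ) + 1), Φ (a n • e n)
          = ∑ n ∈ Finset.Icc (-(M : ℤ)) (M : ℤ), φ (a (n + 1)) • e n := by
        rw [← Finset.map_add_right_Icc (-(M : ℤ)) (M : ℤ) 1, Finset.sum_map]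
        refine Finset.sum_congr rfl fun n _ => ?_
        rw [addRightEmbedding_apply, hΦsmul, he]
        norm_num
      rw [h2, hΦsmul, he, hΦsmul, he]
      have e1 : (-(M : ℤ) - 1 - 1) = -(M : ℤ) - 2 := by ring
      have e2 : (-(M : ℤ) - 1) = -(M : ℤ) - 1 := rfl
      rw [e1]
      ring
    have h3 : ∑ n ∈ Finset.Icc (-(M : ℤ)) (M : ℤ), ((p : R) * a n) • e n
        = (p : D) * ∑ n ∈ Finset.Icc (-(M : ℤ)) (M : ℤ), a n • e n := by
      rw [Finset.mul_sum]
      exact Finset.sum_congr rfl fun n _ => hsmulp (a n) (e n)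
    have h4 : ∑ n ∈ Finset.Icc (-(M : ℤ)) (M : ℤ), (if n = 0 then (p : R) else 0) • e n
        = (p : D) * e 0 := by
      rw [Finset.sum_eq_single 0]
      · rw [if_pos rfl, Algebra.smul_def, map_natCast]
      · intro n _ hn
        rw [if_neg hn, zero_smul]
      · intro h
        exact absurd (Finset.mem_Icc.2 (by omega)) h
    have h5 : ∑ n ∈ Finset.Icc (-(M : ℤ)) (M : ℤ), c n • e n
        = ∑ n ∈ Finset.Icc (-(M : ℤ)) (M : ℤ), φ (a (n + 1)) • e n
          - ∑ n ∈ Finset.Icc (-(M : ℤ)) (M : ℤ), ((p : R) * a n) • e n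
          - ∑ n ∈ Finset.Icc (-(M : ℤ)) (M : ℤ), (if n = 0 then (p : R) else 0) • e n := by
      rw [← Finset.sum_sub_distrib, ← Finset.sum_sub_distrib]
      refine Finset.sum_congr rfl fun n _ => ?_
      simp only [hcdef, sub_smul]
    rw [h5, h1, h3, h4]
    abel
  -- c is identically zero
  have hc0 : ∀ n : ℤ, c n = 0 := by
    apply hfree
    · -- decay of c
      intro k
      obtain ⟨N, hN⟩ := hconv k
      refine ⟨N + 1, fun n hn => ?_⟩
      have hn0 : n ≠ 0 := by
        rcases abs_cases n with ⟨h1, h2⟩ | ⟨h1, h2⟩ <;> omega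
      obtain ⟨r1, hr1⟩ := hN (n + 1) (by
        rcases abs_cases n with ⟨h1, h2⟩ | ⟨h1, h2⟩ <;>
          rcases abs_cases (n + 1) with ⟨h3, h4⟩ | ⟨h3, h4⟩ <;> omega)
      obtain ⟨r2, hr2⟩ := hN n (le_trans (by exact_mod_cast Nat.le_succ N) hn)
      refine ⟨φ r1 - (p : R) * r2, ?_⟩
      simp only [hcdef, hr1, hr2, if_neg hn0, hφpk]
      ring
    · -- partial sums divisible
      intro k
      obtain ⟨N1, hN1⟩ := hS k
      obtain ⟨N2, hN2⟩ := hconv k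
      refine ⟨max N1 N2, fun M hM => ?_⟩
      obtain ⟨d, hd⟩ := hN1 M (le_trans (le_max_left _ _) hM)
      obtain ⟨d', hd'⟩ := hN1 (M + 1) (by omega)
      push_cast at hd'
      obtain ⟨r1, hr1⟩ := hN2 (-(M : ℤ) - 1) (by
        rw [abs_of_nonpos (by omega)]
        omega)
      obtain ⟨r2, hr2⟩ := hN2 (-(M : ℤ)) (by
        rw [abs_of_nonpos (by omega)]
        omega)
      have hT : ∑ n ∈ Finset.Icc (-(M : ℤ)) (M : ℤ), a n • e n = S - (p : D) ^ k * d := by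
        linear_combination -hd
      have hT' : Φ (∑ n ∈ Finset.Icc (-(M : ℤ) - 1) ((M : ℤ) + 1), a n • e n)
          = Φ S - (p : D) ^ k * Φ d' := by
        have : ∑ n ∈ Finset.Icc (-(M : ℤ) - 1) ((M : ℤ) + 1), a n • e n
            = S - (p : D) ^ k * d' := by
          have hIcc : Finset.Icc (-(M : ℤ) - 1) ((M : ℤ) + 1)
              = Finset.Icc (-((M : ℤ) + 1)) ((M : ℤ) + 1) := by
            congr 1
            ring
          rw [hIcc]
          linear_combination -hd'
        rw [this, map_sub, map_mul, map_pow, map_natCast]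
      have hB1 : φ (a (-(M : ℤ) - 1)) • e (-(M : ℤ) - 2)
          = (p : D) ^ k * (φ r1 • e (-(M : ℤ) - 2)) := by
        rw [hr1, hφpk, hsmulpk]
      have hB2 : φ (a (-(M : ℤ))) • e (-(M : ℤ) - 1)
          = (p : D) ^ k * (φ r2 • e (-(M : ℤ) - 1)) := by
        rw [hr2, hφpk, hsmulpk]
      refine ⟨-Φ d' + (p : D) * d - φ r1 • e (-(M : ℤ) - 2) - φ r2 • e (-(M : ℤ) - 1), ?_⟩
      rw [key M, hT', hT, hB1, hB2]
      linear_combination heq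
  -- the recursion
  have hrec : ∀ n : ℤ, φ (a (n + 1)) = (p : R) * a n + (if n = 0 then (p : R) else 0) := by
    intro n
    have := hc0 n
    simp only [hcdef] at this
    linear_combination this
  -- negative part: a m divisible by all powers of p
  have hneg : ∀ (k : ℕ) (m : ℤ), m ≤ 0 → ∃ r : R, a m = (p : R) ^ k * r := by
    intro k
    induction k with
    | zero => exact fun m _ => ⟨a m, by ring⟩
    | succ k ih =>
      intro m hm
      obtain ⟨r, hr⟩ := ih (m - 1) (by omega)
      have h1 := hrec (m - 1)
      rw [if_neg (by omega : m - 1 ≠ 0), sub_add_cancel, hr, add_zero] at h1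
      refine ⟨φ.symm r, ?_⟩
      have : a m = φ.symm ((p : R) * ((p : R) ^ k * r)) := by
        rw [← h1, RingEquiv.symm_apply_apply]
      rw [this, map_mul, map_mul, map_pow, map_natCast]
      ring
  have hzero : ∀ m : ℤ, m ≤ 0 → a m = 0 := by
    intro m hm
    refine IsHausdorff.haus (hRcompl.toIsHausdorff) (a m) fun k => ?_
    rw [SModEq.zero, smul_eq_mul, Ideal.mul_top, Ideal.span_singleton_pow,
      Ideal.mem_span_singleton]
    obtain ⟨r, hr⟩ := hneg k m hm
    exact ⟨r, hr⟩
  constructor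
  · -- positive part
    have ha1 : a 1 = (p : R) := by
      have h1 := hrec 0
      rw [if_pos rfl, hzero 0 le_rfl, mul_zero, zero_add, zero_add] at h1
      have : φ (a 1) = φ ((p : R)) := by rw [h1, hφp]
      exact φ.injective this
    refine fun n hn => Int.le_induction (motive := fun n _ => a n = (p : R) ^ n.toNat) ?_ ?_ n hn
    · simpa using ha1
    · intro n hn1 ih
      have h1 := hrec n
      rw [if_neg (by omega : n ≠ 0), add_zero, ih] at h1
      have h2 : φ ((p : R) ^ (n + 1).toNat) = (p : R) * (p : R) ^ n.toNat := by
        rw [map_pow, hφp]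
        have h3 : (n + 1).toNat = n.toNat + 1 := by omega
        rw [h3, pow_succ]
        ring
      exact φ.injective (h1.trans h2.symm)
  · exact hzero
end

section
/- Let R be a complete discrete valuation ring with maximal ideal (p) and algebraically closed residue field, with its unique Frobenius lift φ (an automorphism of R). Let λ₀, λ₁ ∈ R. If there exists a sequence (aₙ)_{n∈ℤ} in R with aₙ → 0 p-adically as n → ±∞, not identically zero, satisfying a₂ = p, aₙ = 0 for n ≤ 1, and the recurrence φ²(aₙ₊₂) + λ₁φ(aₙ₊₁) + pλ₀aₙ = 0 for all n ≥ 2 together with a₃ = −p·φ^{−2}(λ₁), then λ₁ ∈ pR. Conversely, if λ₁ ∈ pR, then the recurrence with these initial conditions has a unique solution (aₙ) in R and satisfies a_{2k−1}, a_{2k} ∈ pᵏR for k ≥ 2, so aₙ → 0 p-adically. -/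
section Aux

variable {R : Type*} [CommRing R]

/-- Auxiliary two-step recursion: pairs `(b n, b (n+1))`. -/
def stmt9seqA (φ : R ≃+* R) (lam0 lam1 q : R) : ℕ → R × R
  | 0 => (q, -(q * φ.symm (φ.symm lam1)))
  | n+1 => ((stmt9seqA φ lam0 lam1 q n).2,
      φ.symm (φ.symm (-(lam1 * φ (stmt9seqA φ lam0 lam1 q n).2)
        - q * lam0 * (stmt9seqA φ lam0 lam1 q n).1)))

def stmt9seqB (φ : R ≃+* R) (lam0 lam1 q : R) (n : ℕ) : R :=
  (stmt9seqA φ lam0 lam1 q n).1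

lemma stmt9seqA_snd (φ : R ≃+* R) (lam0 lam1 q : R) (n : ℕ) :
    (stmt9seqA φ lam0 lam1 q n).2 = stmt9seqB φ lam0 lam1 q (n+1) := rfl

lemma stmt9seqB_zero (φ : R ≃+* R) (lam0 lam1 q : R) :
    stmt9seqB φ lam0 lam1 q 0 = q := rfl

lemma stmt9seqB_one (φ : R ≃+* R) (lam0 lam1 q : R) :
    stmt9seqB φ lam0 lam1 q 1 = -(q * φ.symm (φ.symm lam1)) := rfl

lemma stmt9seqB_rec (φ : R ≃+* R) (lam0 lam1 q : R) (n : ℕ) :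
    φ (φ (stmt9seqB φ lam0 lam1 q (n+2))) + lam1 * φ (stmt9seqB φ lam0 lam1 q (n+1))
      + q * lam0 * stmt9seqB φ lam0 lam1 q n = 0 := by
  have h : stmt9seqB φ lam0 lam1 q (n+2)
      = φ.symm (φ.symm (-(lam1 * φ (stmt9seqB φ lam0 lam1 q (n+1)))
        - q * lam0 * stmt9seqB φ lam0 lam1 q n)) := by
    show (stmt9seqA φ lam0 lam1 q (n+2)).1 = _
    rw [stmt9seqA]
    rw [stmt9seqA_snd]
    rfl
  rw [h, RingEquiv.apply_symm_apply, RingEquiv.apply_symm_apply]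
  ring

/-- Divisibility transfers along a ring automorphism fixing the divisor. -/
lemma stmt9dvd_map_iff (φ : R ≃+* R) {x y : R} (h : φ x = x) : x ∣ φ y ↔ x ∣ y := by
  constructor
  · rintro ⟨r, hr⟩
    refine ⟨φ.symm r, φ.injective ?_⟩
    rw [hr, map_mul, h]
    rw [RingEquiv.apply_symm_apply]
  · rintro ⟨r, hr⟩
    exact ⟨φ r, by rw [hr, map_mul, h]⟩

end Aux

/-- Let `R` be a complete DVR with maximal ideal `(p)` and algebraically
closed residue field, with its unique Frobenius lift `φ` (an automorphism).  For
`λ₀ λ₁ ∈ R`: if there is a not-identically-zero sequence `(aₙ)` in `R` tending to `0`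
p-adically at `±∞` with `a₂ = p`, `a₃ = -p·φ⁻²(λ₁)`, `aₙ = 0` for `n ≤ 1` and
`φ²(a_{n+2}) + λ₁ φ(a_{n+1}) + p λ₀ aₙ = 0` for `n ≥ 2`, then `λ₁ ∈ pR`.
Conversely, if `λ₁ ∈ pR` then there is a unique sequence satisfying these initial
conditions and recurrence, and it satisfies `a_{2k-1}, a_{2k} ∈ pᵏR` for `k ≥ 2`,
hence tends to `0` p-adically. -/
theorem stmt_9 (p : ℕ) (hp : p.Prime) (hodd : p ≠ 2)
    (R : Type*) [CommRing R] [IsDomain R] [IsDiscreteValuationRing R]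
    (hirr : Irreducible (p : R)) (hcompl : IsAdicComplete (Ideal.span {(p : R)}) R)
    [IsAlgClosed (IsLocalRing.ResidueField R)]
    (φ : R ≃+* R) (hφ : ∀ x : R, ∃ c : R, φ x = x ^ p + (p : R) * c)
    (lam0 lam1 : R) :
    ((∃ a : ℤ → R,
        (∀ k : ℕ, ∃ N : ℕ, ∀ n : ℤ, (N : ℤ) ≤ |n| → ∃ r : R, a n = (p : R) ^ k * r) ∧
        (∃ n, a n ≠ 0) ∧
        a 2 = (p : R) ∧
        a 3 = -((p : R) * φ.symm (φ.symm lam1)) ∧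
        (∀ n : ℤ, n ≤ 1 → a n = 0) ∧
        (∀ n : ℤ, 2 ≤ n →
          φ (φ (a (n + 2))) + lam1 * φ (a (n + 1)) + (p : R) * lam0 * a n = 0)) →
      ∃ c : R, lam1 = (p : R) * c) ∧
    ((∃ c : R, lam1 = (p : R) * c) →
      (∃! a : ℤ → R,
        a 2 = (p : R) ∧
        a 3 = -((p : R) * φ.symm (φ.symm lam1)) ∧
        (∀ n : ℤ, n ≤ 1 → a n = 0) ∧
        (∀ n : ℤ, 2 ≤ n →
          φ (φ (a (n + 2))) + lam1 * φ (a (n + 1)) + (p : R) * lam0 * a n = 0)) ∧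
      (∀ a : ℤ → R,
        (a 2 = (p : R) ∧
          a 3 = -((p : R) * φ.symm (φ.symm lam1)) ∧
          (∀ n : ℤ, n ≤ 1 → a n = 0) ∧
          (∀ n : ℤ, 2 ≤ n →
            φ (φ (a (n + 2))) + lam1 * φ (a (n + 1)) + (p : R) * lam0 * a n = 0)) →
        (∀ k : ℕ, 2 ≤ k →
          (∃ r : R, a (2 * k - 1) = (p : R) ^ k * r) ∧
          (∃ r : R, a (2 * k) = (p : R) ^ k * r)) ∧
        (∀ k : ℕ, ∃ N : ℕ, ∀ n : ℤ, (N : ℤ) ≤ |n| → ∃ r : R, a n = (p : R) ^ k * r))) := by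
  set q : R := (p : R) with hq
  have hφq : φ q = q := by simp [hq]
  have hφsq : φ.symm q = q := by
    apply φ.injective; rw [RingEquiv.apply_symm_apply, hφq]
  have hqne : q ≠ 0 := hirr.ne_zero
  have hqnu : ¬ IsUnit q := hirr.not_isUnit
  have hqmem : q ∈ IsLocalRing.maximalIdeal R := by
    rw [IsLocalRing.mem_maximalIdeal]; exact hqnu
  -- key divisibility transfer
  have hdvdφ : ∀ (k : ℕ) (y : R), q ^ k ∣ φ y ↔ q ^ k ∣ y := fun k y =>
    stmt9dvd_map_iff φ (by rw [map_pow, hφq])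
  have hdvdφs : ∀ (k : ℕ) (y : R), q ^ k ∣ φ.symm y ↔ q ^ k ∣ y := fun k y =>
    stmt9dvd_map_iff φ.symm (by rw [map_pow, hφsq])
  constructor
  · -- forward direction
    rintro ⟨a, hdecay, -, ha2, ha3, hzero, hrec⟩
    by_contra hnc
    -- lam1 is a unit
    have hu1 : IsUnit lam1 := by
      by_contra h
      have : lam1 ∈ IsLocalRing.maximalIdeal R := by
        rw [IsLocalRing.mem_maximalIdeal]; exact h
      rw [(IsDiscreteValuationRing.irreducible_iff_uniformizer q).mp hirr,
        Ideal.mem_span_singleton] at this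
      obtain ⟨c, hc⟩ := this
      exact hnc ⟨c, hc⟩
    -- every a (m+2) is q times a unit
    have key : ∀ m : ℕ, (∃ u : R, IsUnit u ∧ a ((m : ℤ) + 2) = q * u) ∧
        (∃ u : R, IsUnit u ∧ a ((m : ℤ) + 3) = q * u) := by
      intro m
      induction m with
      | zero =>
        refine ⟨⟨1, isUnit_one, by simpa using ha2⟩,
          ⟨-(φ.symm (φ.symm lam1)), ?_, by rw [show ((0:ℕ):ℤ) + 3 = 3 by norm_num, ha3]; ring⟩⟩
        exact (hu1.map φ.symm |>.map φ.symm).neg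
      | succ m ih =>
        obtain ⟨⟨u, hu, hau⟩, ⟨v, hv, hav⟩⟩ := ih
        refine ⟨⟨v, hv, by rw [show ((m+1:ℕ):ℤ) + 2 = (m:ℤ) + 3 by push_cast; ring]; exact hav⟩, ?_⟩
        have hr := hrec ((m:ℤ) + 2) (by omega)
        have h1 : φ (φ (a ((m:ℤ) + 4))) = q * (-(lam1 * φ v) - q * lam0 * u) := by
          have : φ (φ (a ((m:ℤ)+2+2))) = -(lam1 * φ (a ((m:ℤ)+2+1))) - q * lam0 * a ((m:ℤ)+2) := by
            linear_combination hr
          rw [show (m:ℤ)+2+2 = (m:ℤ)+4 by ring, show (m:ℤ)+2+1 = (m:ℤ)+3 by ring,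
            hav, hau] at this
          rw [this, map_mul, hφq]; ring
        set w : R := -(lam1 * φ v) - q * lam0 * u with hw
        have hwu : IsUnit w := by
          by_contra hnw
          have hmem : w ∈ IsLocalRing.maximalIdeal R := by
            rw [IsLocalRing.mem_maximalIdeal]; exact hnw
          have h2 : q * lam0 * u ∈ IsLocalRing.maximalIdeal R :=
            Ideal.mul_mem_right _ _ (Ideal.mul_mem_right _ _ hqmem)
          have h3 : -(lam1 * φ v) ∈ IsLocalRing.maximalIdeal R := by
            have := Ideal.add_mem _ hmem h2
            rw [hw] at this
            simpa using this
          have : IsUnit (-(lam1 * φ v)) := (hu1.mul (hv.map φ)).neg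
          exact (IsLocalRing.mem_maximalIdeal _).mp h3 this
        refine ⟨φ.symm (φ.symm w), (hwu.map φ.symm).map φ.symm, ?_⟩
        apply φ.injective; apply φ.injective
        rw [show ((m+1:ℕ):ℤ) + 3 = (m:ℤ) + 4 by push_cast; ring, h1,
          map_mul, map_mul, hφq, hφq, RingEquiv.apply_symm_apply, RingEquiv.apply_symm_apply]
      -- contradiction with decay at k = 2
    obtain ⟨N, hN⟩ := hdecay 2
    obtain ⟨⟨u, hu, hau⟩, -⟩ := key N
    obtain ⟨r, hr⟩ := hN ((N : ℤ) + 2) (by rw [abs_of_nonneg (by positivity)]; omega)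
    rw [hau] at hr
    have : u = q * r := by
      have : q * u = q * (q * r) := by rw [hr]; ring
      exact mul_left_cancel₀ hqne this
    exact hqnu (isUnit_of_mul_isUnit_left (this ▸ hu : IsUnit (q * r)))
  · -- converse
    rintro ⟨c, hc⟩
    set b : ℕ → R := stmt9seqB φ lam0 lam1 q with hb
    set a : ℤ → R := fun n => if n ≤ 1 then 0 else b (n - 2).toNat with ha
    have haval : ∀ m : ℕ, a ((m : ℤ) + 2) = b m := by
      intro m
      rw [ha]
      simp only
      rw [if_neg (by omega)]
      congr 1
      omega
    have ha2 : a 2 = q := by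
      have := haval 0; simpa [hb, stmt9seqB_zero] using this
    have ha3 : a 3 = -(q * φ.symm (φ.symm lam1)) := by
      have := haval 1
      rw [show ((1:ℕ):ℤ) + 2 = 3 by norm_num] at this
      rw [this, hb, stmt9seqB_one]
    have hz : ∀ n : ℤ, n ≤ 1 → a n = 0 := fun n hn => by rw [ha]; simp only; rw [if_pos hn]
    have hrec : ∀ n : ℤ, 2 ≤ n →
        φ (φ (a (n + 2))) + lam1 * φ (a (n + 1)) + q * lam0 * a n = 0 := by
      intro n hn
      obtain ⟨m, rfl⟩ : ∃ m : ℕ, n = (m : ℤ) + 2 := ⟨(n - 2).toNat, by omega⟩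
      rw [show (m:ℤ) + 2 + 2 = ((m+2 : ℕ) : ℤ) + 2 by push_cast; ring,
        show (m:ℤ) + 2 + 1 = ((m+1 : ℕ) : ℤ) + 2 by push_cast; ring,
        haval, haval, haval]
      exact stmt9seqB_rec φ lam0 lam1 q m
    -- uniqueness
    have huniq : ∀ a' : ℤ → R,
        (a' 2 = q ∧ a' 3 = -(q * φ.symm (φ.symm lam1)) ∧ (∀ n : ℤ, n ≤ 1 → a' n = 0) ∧
         ∀ n : ℤ, 2 ≤ n → φ (φ (a' (n + 2))) + lam1 * φ (a' (n + 1)) + q * lam0 * a' n = 0) →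
        a' = a := by
      rintro a' ⟨h2, h3, hz', hrec'⟩
      have key : ∀ m : ℕ, a' ((m : ℤ) + 2) = a ((m : ℤ) + 2) ∧
          a' ((m : ℤ) + 3) = a ((m : ℤ) + 3) := by
        intro m
        induction m with
        | zero =>
          constructor
          · rw [show ((0:ℕ):ℤ) + 2 = 2 by norm_num, h2, ha2]
          · rw [show ((0:ℕ):ℤ) + 3 = 3 by norm_num, h3, ha3]
        | succ m ih =>
          obtain ⟨ih1, ih2⟩ := ih
          refine ⟨by rw [show ((m+1:ℕ):ℤ) + 2 = (m:ℤ) + 3 by push_cast; ring]; exact ih2, ?_⟩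
          have e1 := hrec' ((m:ℤ) + 2) (by omega)
          have e2 := hrec ((m:ℤ) + 2) (by omega)
          rw [show (m:ℤ)+2+1 = (m:ℤ)+3 by ring, show (m:ℤ)+2+2 = (m:ℤ)+4 by ring] at e1 e2
          rw [ih1, ih2] at e1
          have : φ (φ (a' ((m:ℤ)+4))) = φ (φ (a ((m:ℤ)+4))) := by
            linear_combination e1 - e2
          have h4 := φ.injective (φ.injective this)
          rw [show ((m+1:ℕ):ℤ) + 3 = (m:ℤ) + 4 by push_cast; ring]
          exact h4
      funext n
      rcases le_or_gt n 1 with h | h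
      · rw [hz' n h, hz n h]
      · obtain ⟨m, rfl⟩ : ∃ m : ℕ, n = (m : ℤ) + 2 := ⟨(n - 2).toNat, by omega⟩
        exact (key m).1
    -- divisibility for any sequence satisfying the conditions
    have hdiv : ∀ a' : ℤ → R,
        (a' 2 = q ∧ a' 3 = -(q * φ.symm (φ.symm lam1)) ∧ (∀ n : ℤ, n ≤ 1 → a' n = 0) ∧
         ∀ n : ℤ, 2 ≤ n → φ (φ (a' (n + 2))) + lam1 * φ (a' (n + 1)) + q * lam0 * a' n = 0) →
        ∀ k : ℕ, 2 ≤ k → q ^ k ∣ a' (2 * (k : ℤ) - 1) ∧ q ^ k ∣ a' (2 * (k : ℤ)) := by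
      rintro a' ⟨h2, h3, hz', hrec'⟩
      intro k hk
      obtain ⟨j, rfl⟩ : ∃ j : ℕ, k = j + 2 := ⟨k - 2, by omega⟩
      clear hk
      induction j with
      | zero =>
        constructor
        · rw [show 2 * ((0+2:ℕ):ℤ) - 1 = 3 by norm_num, h3, hc]
          refine ⟨-(φ.symm (φ.symm c)), ?_⟩
          rw [map_mul, map_mul, hφsq, hφsq]
          ring
        · -- a' 4 : use recurrence at n = 2
          have e := hrec' 2 (by norm_num)
          rw [show (2:ℤ)+2 = 4 by norm_num, show (2:ℤ)+1 = 3 by norm_num, h2, h3] at e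
          have h4 : φ (φ (a' 4)) = -(lam1 * φ (-(q * φ.symm (φ.symm lam1)))) - q * lam0 * q := by
            linear_combination e
          have : q ^ 2 ∣ φ (φ (a' 4)) := by
            rw [h4, hc]
            refine dvd_sub ?_ ?_
            · rw [map_neg, map_mul, hφq]
              exact ⟨c * φ (φ.symm (φ.symm (q * c))), by ring⟩
            · exact ⟨lam0, by ring⟩
          rw [hdvdφ, hdvdφ] at this
          rw [show 2 * ((0+2:ℕ):ℤ) = 4 by norm_num]
          simpa using this
      | succ j ih =>
        obtain ⟨ih1, ih2⟩ := ih
        set K : ℕ := j + 2 with hK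
        -- step: get q^(K+1) ∣ a'(2K+1) and a'(2K+2)
        have step1 : q ^ (K + 1) ∣ a' (2 * (K : ℤ) + 1) := by
          have e := hrec' (2 * (K : ℤ) - 1) (by omega)
          rw [show 2*(K:ℤ)-1+2 = 2*(K:ℤ)+1 by ring, show 2*(K:ℤ)-1+1 = 2*(K:ℤ) by ring] at e
          have h4 : φ (φ (a' (2*(K:ℤ)+1)))
              = -(lam1 * φ (a' (2*(K:ℤ)))) - q * lam0 * a' (2*(K:ℤ)-1) := by
            linear_combination e
          have : q ^ (K+1) ∣ φ (φ (a' (2*(K:ℤ)+1))) := by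
            rw [h4]
            refine dvd_sub ?_ ?_
            · rw [dvd_neg, hc]
              obtain ⟨r, hr⟩ := ih2
              rw [hr, map_mul, map_pow, hφq]
              exact ⟨c * φ r, by ring⟩
            · obtain ⟨r, hr⟩ := ih1
              rw [hr]
              exact ⟨lam0 * r, by rw [pow_succ]; ring⟩
          rw [hdvdφ, hdvdφ] at this
          exact this
        have step2 : q ^ (K + 1) ∣ a' (2 * (K : ℤ) + 2) := by
          have e := hrec' (2 * (K : ℤ)) (by omega)
          have h4 : φ (φ (a' (2*(K:ℤ)+2)))
              = -(lam1 * φ (a' (2*(K:ℤ)+1))) - q * lam0 * a' (2*(K:ℤ)) := by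
            linear_combination e
          have : q ^ (K+1) ∣ φ (φ (a' (2*(K:ℤ)+2))) := by
            rw [h4]
            refine dvd_sub ?_ ?_
            · rw [dvd_neg]
              obtain ⟨r, hr⟩ := step1
              rw [hr, map_mul, map_pow, hφq]
              exact ⟨lam1 * φ r, by ring⟩
            · obtain ⟨r, hr⟩ := ih2
              rw [hr]
              exact ⟨lam0 * r, by rw [pow_succ]; ring⟩
          rw [hdvdφ, hdvdφ] at this
          exact this
        constructor
        · rw [show 2 * ((j+1+2:ℕ):ℤ) - 1 = 2 * (K:ℤ) + 1 by push_cast [hK]; ring]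
          rw [show j+1+2 = K+1 by omega]
          exact step1
        · rw [show 2 * ((j+1+2:ℕ):ℤ) = 2 * (K:ℤ) + 2 by push_cast [hK]; ring]
          rw [show j+1+2 = K+1 by omega]
          exact step2
    refine ⟨⟨a, ⟨ha2, ha3, hz, hrec⟩, huniq⟩, ?_⟩
    rintro a' ⟨h2, h3, hz', hrec'⟩
    have hd := hdiv a' ⟨h2, h3, hz', hrec'⟩
    constructor
    · intro k hk
      obtain ⟨d1, d2⟩ := hd k hk
      exact ⟨d1, d2⟩
    · intro k
      refine ⟨2 * k + 4, ?_⟩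
      intro n hn
      rcases le_or_gt n 1 with h | h
      · exact ⟨0, by rw [hz' n h]; ring⟩
      · have hn' : (2 * k + 4 : ℤ) ≤ n := by
          rw [abs_of_nonneg (by omega)] at hn
          push_cast at hn ⊢
          omega
        obtain ⟨m, hm2, hkm, hcase⟩ : ∃ m : ℕ, 2 ≤ m ∧ k ≤ m ∧
            (n = 2 * (m : ℤ) - 1 ∨ n = 2 * (m : ℤ)) := by
          refine ⟨((n + 1) / 2).toNat, by omega, by omega, ?_⟩
          omega
        obtain ⟨d1, d2⟩ := hd m hm2
        have hpk : (q : R) ^ k ∣ q ^ m := pow_dvd_pow q hkm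
        rcases hcase with rfl | rfl
        · exact hpk.trans d1
        · exact hpk.trans d2
end

section
/- Let A be a perfectoid-type setup: A is a p-torsion free ring, p-adically separated, containing a compatible system of p-power roots p^{1/pⁿ}, equipped with a ring endomorphism Φ fixing all p^{1/pⁿ} and inducing an injective endomorphism of A/pA, with A totally integrally closed in A[1/p]. Let C be the direct limit of A along Φ. Then the p-adic completion Ĉ is p-torsion free and totally integrally closed in Ĉ[1/p]. -/
namespace Stmt16

/-! ### Generic lemmas about `p`-torsion free rings and their localizations away from `p` -/

variable {R : Type*} [CommRing R] (p : ℕ)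

lemma pow_tf (htf : ∀ a : R, (p : R) * a = 0 → a = 0) :
    ∀ (m : ℕ) (a : R), (p : R) ^ m * a = 0 → a = 0 := by
  intro m
  induction m with
  | zero => intro a h; simpa using h
  | succ m ih =>
      intro a h
      refine ih a (htf _ ?_)
      rw [← h]; ring

lemma cancel_pow (htf : ∀ a : R, (p : R) * a = 0 → a = 0) (m : ℕ) (u v : R)
    (h : (p : R) ^ m * u = (p : R) ^ m * v) : u = v := by
  have h0 : (p : R) ^ m * (u - v) = 0 := by rw [mul_sub, h, sub_self]
  exact sub_eq_zero.mp (pow_tf p htf m (u - v) h0)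

lemma map_inj (htf : ∀ a : R, (p : R) * a = 0 → a = 0) :
    Function.Injective (algebraMap R (Localization.Away (p : R))) := by
  have hM : Submonoid.powers (p : R) ≤ nonZeroDivisors R := by
    refine Submonoid.powers_le.mpr ?_
    rw [mem_nonZeroDivisors_iff_right]
    intro x hx
    exact htf x (by rwa [mul_comm])
  exact IsLocalization.injective (Localization.Away (p : R)) hM

lemma punit (e : ℕ) : IsUnit (algebraMap R (Localization.Away (p : R)) ((p : R) ^ e)) :=
  IsLocalization.map_units (M := Submonoid.powers (p : R)) _ ⟨(p : R) ^ e, ⟨e, rfl⟩⟩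

lemma lgen1 (htf : ∀ a : R, (p : R) * a = 0 → a = 0)
    (α : Localization.Away (p : R)) (N : ℕ)
    (hα : ∀ n, ∃ a, algebraMap R (Localization.Away (p : R)) ((p : R) ^ N) * α ^ n =
      algebraMap R (Localization.Away (p : R)) a) :
    ∃ (x : R) (e : ℕ), α * algebraMap R (Localization.Away (p : R)) ((p : R) ^ e) =
        algebraMap R (Localization.Away (p : R)) x ∧
      ∀ n, ∃ b, (p : R) ^ N * x ^ n = ((p : R) ^ e) ^ n * b := by
  obtain ⟨⟨x, s⟩, h⟩ := IsLocalization.surj (Submonoid.powers (p : R)) α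
  obtain ⟨e, he⟩ := s.2
  have he' : (p : R) ^ e = (s : R) := he
  have h' : α * algebraMap R (Localization.Away (p : R)) ((p : R) ^ e) =
      algebraMap R (Localization.Away (p : R)) x := by rw [he']; exact h
  refine ⟨x, e, h', fun n => ?_⟩
  obtain ⟨a, ha⟩ := hα n
  refine ⟨a, map_inj p htf ?_⟩
  rw [map_mul, map_mul, map_pow (algebraMap R (Localization.Away (p : R))) x n, ← h',
    map_pow (algebraMap R (Localization.Away (p : R))) ((p : R) ^ e) n, mul_pow,
    ← mul_assoc, ha]
  ring

lemma lgen2 (α : Localization.Away (p : R)) (x y : R) (e : ℕ)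
    (h1 : α * algebraMap R (Localization.Away (p : R)) ((p : R) ^ e) =
      algebraMap R (Localization.Away (p : R)) x)
    (h2 : x = (p : R) ^ e * y) :
    algebraMap R (Localization.Away (p : R)) y = α := by
  have u := punit (R := R) p e
  refine u.mul_left_cancel ?_
  calc algebraMap R (Localization.Away (p : R)) ((p:R)^e) *
        algebraMap R (Localization.Away (p : R)) y
      = algebraMap R (Localization.Away (p : R)) ((p:R)^e * y) := (map_mul _ _ _).symm
    _ = algebraMap R (Localization.Away (p : R)) x := by rw [← h2]
    _ = α * algebraMap R (Localization.Away (p : R)) ((p:R)^e) := h1.symm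
    _ = algebraMap R (Localization.Away (p : R)) ((p:R)^e) * α := mul_comm _ _

lemma tic_div (htf : ∀ a : R, (p : R) * a = 0 → a = 0)
    (htic : TotallyIntegrallyClosedAwayP p R) (x : R) (s N : ℕ)
    (h : ∀ n, ∃ b, (p : R) ^ N * x ^ n = ((p : R) ^ s) ^ n * b) :
    ∃ y, x = (p : R) ^ s * y := by
  set α : Localization.Away (p : R) :=
    IsLocalization.mk' (Localization.Away (p : R)) x
      (⟨(p : R) ^ s, ⟨s, rfl⟩⟩ : Submonoid.powers (p : R)) with hα
  have hspec : α * algebraMap R (Localization.Away (p : R)) ((p : R) ^ s) =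
      algebraMap R (Localization.Away (p : R)) x := IsLocalization.mk'_spec _ x _
  have hint : ∀ n, ∃ a, algebraMap R (Localization.Away (p : R)) ((p : R) ^ N) * α ^ n =
      algebraMap R (Localization.Away (p : R)) a := by
    intro n
    obtain ⟨b, hb⟩ := h n
    refine ⟨b, ((punit p s).pow n).mul_left_cancel ?_⟩
    calc algebraMap R (Localization.Away (p : R)) ((p:R)^s) ^ n *
          (algebraMap R (Localization.Away (p : R)) ((p : R) ^ N) * α ^ n)
        = algebraMap R (Localization.Away (p : R)) ((p:R)^N) *
            (α * algebraMap R (Localization.Away (p : R)) ((p:R)^s)) ^ n := by ring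
      _ = algebraMap R (Localization.Away (p : R)) ((p:R)^N * x ^ n) := by
          rw [hspec, map_mul, map_pow (algebraMap R (Localization.Away (p : R))) x n]
      _ = algebraMap R (Localization.Away (p : R)) (((p:R)^s)^n * b) := by rw [hb]
      _ = algebraMap R (Localization.Away (p : R)) ((p:R)^s) ^ n *
            algebraMap R (Localization.Away (p : R)) b := by
          rw [map_mul, map_pow (algebraMap R (Localization.Away (p : R))) ((p:R)^s) n]
  obtain ⟨a, ha⟩ := htic α ⟨N, hint⟩
  refine ⟨a, map_inj p htf ?_⟩
  rw [map_mul, ha, mul_comm ((algebraMap R (Localization.Away (p : R))) ((p:R)^s)) α, hspec]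

lemma root_closed (htf : ∀ a : R, (p : R) * a = 0 → a = 0)
    (htic : TotallyIntegrallyClosedAwayP p R) (x : R) (t q : ℕ) (hq : 1 ≤ q)
    (h : ∃ b, x ^ q = ((p : R) ^ t) ^ q * b) :
    ∃ y, x = (p : R) ^ t * y := by
  obtain ⟨b, hb⟩ := h
  refine tic_div p htf htic x t (t * (q - 1)) (fun n => ?_)
  set P := (p : R) ^ t with hP
  set d := n / q with hd
  set r := n % q with hrr
  have hr : r < q := Nat.mod_lt _ hq
  have hn : n = q * d + r := (Nat.div_add_mod n q).symm
  refine ⟨P ^ (q - 1 - r) * b ^ d * x ^ r, ?_⟩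
  have hx : x ^ n = (P ^ q * b) ^ d * x ^ r := by
    rw [← hb, ← pow_mul, ← pow_add, ← hn]
  have hp1 : (p : R) ^ (t * (q - 1)) = P ^ (q - 1) := pow_mul _ _ _
  have hexp : (q - 1) + q * d = n + (q - 1 - r) := by omega
  calc (p:R) ^ (t * (q-1)) * x ^ n = P ^ (q-1) * ((P ^ q * b) ^ d * x ^ r) := by rw [hp1, hx]
    _ = P ^ ((q-1) + q * d) * (b ^ d * x ^ r) := by rw [pow_add, mul_pow, ← pow_mul]; ring
    _ = P ^ (n + (q - 1 - r)) * (b ^ d * x ^ r) := by rw [hexp]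
    _ = P ^ n * (P ^ (q - 1 - r) * b ^ d * x ^ r) := by rw [pow_add]; ring

lemma roots_bound (hp2 : 2 ≤ p) (ϖ : ℕ → R)
    (hϖ : ∀ k, ϖ k ^ p ^ k = (p : R)) (c : R) (e : ℕ)
    (h : ∀ k, ∃ u, ϖ k * c = (p : R) ^ e * u) :
    ∀ n, ∃ b, (p : R) ^ 1 * c ^ n = ((p : R) ^ e) ^ n * b := by
  intro n
  have hk : n ≤ p ^ n := (Nat.lt_pow_self (by omega : 1 < p)).le
  obtain ⟨u, hu⟩ := h n
  refine ⟨ϖ n ^ (p ^ n - n) * u ^ n, ?_⟩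
  have hsplit : ϖ n ^ (p ^ n) = ϖ n ^ (p ^ n - n) * ϖ n ^ n := by
    rw [← pow_add]; congr 1; omega
  calc (p:R) ^ 1 * c ^ n = ϖ n ^ (p ^ n) * c ^ n := by rw [pow_one, ← hϖ n]
    _ = ϖ n ^ (p ^ n - n) * ((ϖ n * c) ^ n) := by rw [hsplit, mul_pow]; ring
    _ = ϖ n ^ (p ^ n - n) * (((p:R) ^ e) ^ n * u ^ n) := by rw [hu, mul_pow]
    _ = ((p:R) ^ e) ^ n * (ϖ n ^ (p ^ n - n) * u ^ n) := by ring

end Stmt16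

namespace Stmt16

/-! ### The direct limit `C` -/

variable {A : Type*} [CommRing A] {C : Type*} [CommRing C] (p : ℕ)

lemma iter_pmul (Φ : A →+* A) (L m : ℕ) (y : A) :
    Φ^[L] ((p : A) ^ m * y) = (p : A) ^ m * Φ^[L] y := by
  induction L with
  | zero => simp
  | succ L ih =>
      rw [Function.iterate_succ_apply', ih, map_mul, map_pow, map_natCast,
        Function.iterate_succ_apply' Φ L y]

lemma iter_pmul' (Φ : A →+* A) (L : ℕ) (y : A) :
    Φ^[L] ((p : A) * y) = (p : A) * Φ^[L] y := by
  simpa using iter_pmul p Φ L 1 y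

lemma iter_sub (Φ : A →+* A) (L : ℕ) (u v : A) :
    Φ^[L] (u - v) = Φ^[L] u - Φ^[L] v := by
  induction L with
  | zero => simp
  | succ L ih =>
      rw [Function.iterate_succ_apply', ih, map_sub,
        Function.iterate_succ_apply' Φ L u, Function.iterate_succ_apply' Φ L v]

lemma iter_inj (Φ : A →+* A)
    (hΦinj : ∀ a : A, (∃ c, Φ a = (p : A) * c) → ∃ c, a = (p : A) * c) :
    ∀ (L : ℕ) (a : A), (∃ c, Φ^[L] a = (p : A) * c) → ∃ c, a = (p : A) * c := by
  intro L
  induction L with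
  | zero => intro a h; simpa using h
  | succ L ih =>
      intro a h
      obtain ⟨c, hc⟩ := h
      rw [Function.iterate_succ_apply'] at hc
      exact ih a (hΦinj _ ⟨c, hc⟩)

lemma iter_div (htf : ∀ a : A, (p : A) * a = 0 → a = 0) (Φ : A →+* A)
    (hΦinj : ∀ a : A, (∃ c, Φ a = (p : A) * c) → ∃ c, a = (p : A) * c) :
    ∀ (m L : ℕ) (a : A), (∃ c, Φ^[L] a = (p : A) ^ m * c) → ∃ c, a = (p : A) ^ m * c := by
  intro m
  induction m with
  | zero => intro L a _; exact ⟨a, by simp⟩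
  | succ m ih =>
      intro L a h
      obtain ⟨c, hc⟩ := h
      have h1 : ∃ c', a = (p : A) * c' := by
        refine iter_inj p Φ hΦinj L a ⟨(p : A) ^ m * c, ?_⟩
        rw [hc, pow_succ]; ring
      obtain ⟨a', ha'⟩ := h1
      have h2 : (p : A) * ((p : A) ^ m * c) = (p : A) * Φ^[L] a' := by
        rw [← iter_pmul' p Φ L a', ← ha', hc, pow_succ]; ring
      have h3 : Φ^[L] a' = (p : A) ^ m * c :=
        cancel_pow p htf 1 (Φ^[L] a') ((p : A) ^ m * c) (by simpa [pow_one] using h2.symm)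
      obtain ⟨c', hc'⟩ := ih L a' ⟨c, h3⟩
      exact ⟨c', by rw [ha', hc', pow_succ]; ring⟩

variable (Φ : A →+* A) (g : ℕ → (A →+* C))

lemma g_shift (hcomp : ∀ n, (g (n + 1)).comp Φ = g n) :
    ∀ (m n : ℕ) (a : A), g n a = g (n + m) (Φ^[m] a) := by
  intro m
  induction m with
  | zero => intro n a; simp
  | succ m ih =>
      intro n a
      rw [ih n a, ← hcomp (n + m), Function.iterate_succ_apply']
      rfl

lemma glimit_div (htf : ∀ a : A, (p : A) * a = 0 → a = 0)
    (hΦinj : ∀ a : A, (∃ c, Φ a = (p : A) * c) → ∃ c, a = (p : A) * c)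
    (hcomp : ∀ n, (g (n + 1)).comp Φ = g n)
    (hsurj : ∀ x : C, ∃ n a, g n a = x)
    (hker : ∀ n (a : A), g n a = 0 → ∃ m, Φ^[m] a = 0)
    (m n : ℕ) (a : A) (h : ∃ c, g n a = (p : C) ^ m * c) :
    ∃ b, a = (p : A) ^ m * b := by
  obtain ⟨c, hc⟩ := h
  obtain ⟨r, d, rfl⟩ := hsurj c
  have hshift : g r d = g (n + r) (Φ^[n] d) := by
    rw [g_shift Φ g hcomp n r d, add_comm r n]
  have h1 : g (n + r) (Φ^[r] a) = g (n + r) ((p : A) ^ m * Φ^[n] d) := by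
    rw [← g_shift Φ g hcomp r n a, hc, map_mul, map_pow, map_natCast, hshift]
  have h2 : g (n + r) (Φ^[r] a - (p : A) ^ m * Φ^[n] d) = 0 := by
    rw [map_sub, h1, sub_self]
  obtain ⟨l, hl⟩ := hker _ _ h2
  rw [iter_sub] at hl
  have h3 : Φ^[l + r] a = (p : A) ^ m * Φ^[l] (Φ^[n] d) := by
    rw [Function.iterate_add_apply]
    rw [sub_eq_zero] at hl
    rw [hl, iter_pmul]
  exact iter_div p htf Φ hΦinj m (l + r) a ⟨Φ^[l] (Φ^[n] d), h3⟩

lemma ctf (htf : ∀ a : A, (p : A) * a = 0 → a = 0)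
    (hcomp : ∀ n, (g (n + 1)).comp Φ = g n)
    (hsurj : ∀ x : C, ∃ n a, g n a = x)
    (hker : ∀ n (a : A), g n a = 0 → ∃ m, Φ^[m] a = 0) :
    ∀ c : C, (p : C) * c = 0 → c = 0 := by
  intro c hc
  obtain ⟨r, a, rfl⟩ := hsurj c
  have h1 : g r ((p : A) * a) = 0 := by rw [map_mul, map_natCast]; exact hc
  obtain ⟨l, hl⟩ := hker _ _ h1
  rw [iter_pmul'] at hl
  have h2 : Φ^[l] a = 0 := htf _ hl
  rw [g_shift Φ g hcomp l r a, h2, map_zero]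

lemma ctic (htf : ∀ a : A, (p : A) * a = 0 → a = 0)
    (hΦinj : ∀ a : A, (∃ c, Φ a = (p : A) * c) → ∃ c, a = (p : A) * c)
    (hcomp : ∀ n, (g (n + 1)).comp Φ = g n)
    (hsurj : ∀ x : C, ∃ n a, g n a = x)
    (hker : ∀ n (a : A), g n a = 0 → ∃ m, Φ^[m] a = 0)
    (hAtic : TotallyIntegrallyClosedAwayP p A) :
    TotallyIntegrallyClosedAwayP p C := by
  intro α hα
  obtain ⟨N, hN⟩ := hα
  have hCtf := ctf p Φ g htf hcomp hsurj hker
  obtain ⟨x, e, hxe, hdiv⟩ := lgen1 p hCtf α N hN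
  obtain ⟨r, a, rfl⟩ := hsurj x
  have hA : ∀ n, ∃ b, (p : A) ^ N * a ^ n = ((p : A) ^ e) ^ n * b := by
    intro n
    obtain ⟨b, hb⟩ := hdiv n
    have h1 : g r ((p : A) ^ N * a ^ n) = (p : C) ^ (e * n) * b := by
      rw [map_mul, map_pow, map_pow, map_natCast, hb, ← pow_mul]
    obtain ⟨b', hb'⟩ := glimit_div p Φ g htf hΦinj hcomp hsurj hker (e * n) r _ ⟨b, h1⟩
    exact ⟨b', by rw [hb', pow_mul]⟩
  obtain ⟨y, hy⟩ := tic_div p htf hAtic a e N hA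
  refine ⟨g r y, lgen2 p α (g r a) (g r y) e hxe ?_⟩
  rw [hy, map_mul, map_pow, map_natCast]

end Stmt16

namespace Stmt16

/-! ### The `p`-adic completion -/

variable {C : Type*} [CommRing C] (p : ℕ)

lemma jmem (n : ℕ) (y : C) :
    y ∈ ((Ideal.span {(p : C)}) ^ n • ⊤ : Ideal C) ↔ ∃ d, y = (p : C) ^ n * d := by
  rw [smul_eq_mul, Ideal.mul_top, Ideal.span_singleton_pow, Ideal.mem_span_singleton]
  exact ⟨fun ⟨d, h⟩ => ⟨d, h⟩, fun ⟨d, h⟩ => ⟨d, h⟩⟩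

lemma qmk_zero (n : ℕ) (y : C) :
    Ideal.Quotient.mk ((Ideal.span {(p : C)}) ^ n • ⊤ : Ideal C) y = 0 ↔
      ∃ d, y = (p : C) ^ n * d := by
  rw [Ideal.Quotient.eq_zero_iff_mem]; exact jmem p n y

lemma cauchy_diff (f : AdicCompletion.AdicCauchySequence (Ideal.span {(p : C)}) C)
    {m n : ℕ} (h : m ≤ n) : ∃ d, f m - f n = (p : C) ^ m * d :=
  (jmem p m _).mp (SModEq.sub_mem.mp (f.property h))

lemma qmk_cauchy (f : AdicCompletion.AdicCauchySequence (Ideal.span {(p : C)}) C)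
    {m n : ℕ} (h : m ≤ n) :
    Ideal.Quotient.mk ((Ideal.span {(p : C)}) ^ m • ⊤ : Ideal C) (f n) =
      (AdicCompletion.mk _ C f).val m := by
  show _ = Ideal.Quotient.mk _ (f m)
  refine (Ideal.Quotient.eq.mpr ?_)
  obtain ⟨d, hd⟩ := cauchy_diff p f h
  refine (jmem p m _).mpr ⟨-d, ?_⟩
  rw [← neg_sub (f m) (f n), hd, mul_neg]

lemma div_mk (hCtf : ∀ c : C, (p : C) * c = 0 → c = 0)
    (f : AdicCompletion.AdicCauchySequence (Ideal.span {(p : C)}) C) (t K : ℕ) (htK : t ≤ K)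
    (h : ∀ j, ∃ y, f (j + K) = (p : C) ^ t * y) :
    ∃ y, AdicCompletion.mk _ C f =
      (p : AdicCompletion (Ideal.span {(p : C)}) C) ^ t * y := by
  choose y hy using h
  have hprop : ∀ j, y j ≡ y (j + 1)
      [SMOD ((Ideal.span {(p : C)}) ^ j • ⊤ : Submodule C C)] := by
    intro j
    obtain ⟨d, hd⟩ := cauchy_diff p f (show j + K ≤ (j + 1) + K by omega)
    refine SModEq.sub_mem.mpr ((jmem p j _).mpr ⟨(p : C) ^ (K - t) * d, ?_⟩)
    have hexp : (p : C) ^ t * ((p : C) ^ j * (p : C) ^ (K - t)) = (p : C) ^ (j + K) := by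
      rw [← pow_add, ← pow_add]; congr 1; omega
    have hyy : (p : C) ^ t * (y j - y (j + 1)) =
        (p : C) ^ t * ((p : C) ^ j * ((p : C) ^ (K - t) * d)) := by
      rw [mul_sub, ← hy j, ← hy (j + 1), hd, ← hexp]
      ring
    exact cancel_pow p hCtf t _ _ hyy
  refine ⟨AdicCompletion.mk _ C (AdicCompletion.AdicCauchySequence.mk _ C (fun j => y j) hprop), ?_⟩
  apply Subtype.ext; funext n
  have h1 : ((p : AdicCompletion (Ideal.span {(p : C)}) C) ^ t *
      AdicCompletion.mk _ C (AdicCompletion.AdicCauchySequence.mk _ C (fun j => y j) hprop)).val n =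
      Ideal.Quotient.mk ((Ideal.span {(p : C)}) ^ n • ⊤ : Ideal C) ((p : C) ^ t * y n) := by
    show ((p : C ⧸ ((Ideal.span {(p : C)}) ^ n • ⊤ : Ideal C))) ^ t *
        Ideal.Quotient.mk _ (y n) = _
    rw [← map_natCast (Ideal.Quotient.mk ((Ideal.span {(p : C)}) ^ n • ⊤ : Ideal C)) p,
      ← map_pow, ← map_mul]
  show (AdicCompletion.mk _ C f).val n = _
  rw [h1, ← hy n]
  exact (qmk_cauchy p f (show n ≤ n + K by omega)).symm

lemma stf (hCtf : ∀ c : C, (p : C) * c = 0 → c = 0) :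
    ∀ x : AdicCompletion (Ideal.span {(p : C)}) C,
      (p : AdicCompletion (Ideal.span {(p : C)}) C) * x = 0 → x = 0 := by
  intro x hx
  obtain ⟨f, rfl⟩ := AdicCompletion.mk_surjective _ C x
  apply Subtype.ext; funext n
  have h0 : ((p : AdicCompletion (Ideal.span {(p : C)}) C) *
      AdicCompletion.mk _ C f).val (n + 1) =
      Ideal.Quotient.mk ((Ideal.span {(p : C)}) ^ (n + 1) • ⊤ : Ideal C) ((p : C) * f (n + 1)) := by
    show ((p : C ⧸ ((Ideal.span {(p : C)}) ^ (n + 1) • ⊤ : Ideal C))) *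
        Ideal.Quotient.mk _ (f (n + 1)) = _
    rw [← map_natCast (Ideal.Quotient.mk ((Ideal.span {(p : C)}) ^ (n + 1) • ⊤ : Ideal C)) p,
      ← map_mul]
  have h1 : Ideal.Quotient.mk ((Ideal.span {(p : C)}) ^ (n + 1) • ⊤ : Ideal C)
      ((p : C) * f (n + 1)) = 0 := by rw [← h0, hx]; rfl
  obtain ⟨d, hd⟩ := (qmk_zero p (n + 1) _).mp h1
  have hf : f (n + 1) = (p : C) ^ n * d := by
    refine cancel_pow p hCtf 1 _ _ ?_
    rw [pow_one, hd, pow_succ]; ring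
  show (AdicCompletion.mk _ C f).val n = (0 : AdicCompletion (Ideal.span {(p : C)}) C).val n
  have h2 : (AdicCompletion.mk _ C f).val n =
      Ideal.Quotient.mk ((Ideal.span {(p : C)}) ^ n • ⊤ : Ideal C) (f (n + 1)) :=
    (qmk_cauchy p f (show n ≤ n + 1 by omega)).symm
  rw [h2, hf]
  exact (qmk_zero p n _).mpr ⟨d, rfl⟩

lemma sroot (hCtf : ∀ c : C, (p : C) * c = 0 → c = 0)
    (hCtic : TotallyIntegrallyClosedAwayP p C)
    (x : AdicCompletion (Ideal.span {(p : C)}) C) (t q : ℕ) (hq : 1 ≤ q)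
    (h : ∃ u, x ^ q = ((p : AdicCompletion (Ideal.span {(p : C)}) C) ^ t) ^ q * u) :
    ∃ y, x = (p : AdicCompletion (Ideal.span {(p : C)}) C) ^ t * y := by
  obtain ⟨u, hu⟩ := h
  obtain ⟨f, rfl⟩ := AdicCompletion.mk_surjective _ C x
  refine div_mk p hCtf f t (t * q + t) (by omega) (fun j => ?_)
  obtain ⟨w, hw⟩ := Ideal.Quotient.mk_surjective (u.val (t * q))
  have e1 : Ideal.Quotient.mk ((Ideal.span {(p : C)}) ^ (t * q) • ⊤ : Ideal C)
      ((f (j + (t * q + t))) ^ q) = 0 := by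
    rw [map_pow, qmk_cauchy p f (show t * q ≤ j + (t * q + t) by omega)]
    have : ((AdicCompletion.mk _ C f).val (t * q)) ^ q =
        ((AdicCompletion.mk _ C f) ^ q).val (t * q) := rfl
    rw [this, hu]
    show ((p : C ⧸ ((Ideal.span {(p : C)}) ^ (t * q) • ⊤ : Ideal C)) ^ t) ^ q *
        u.val (t * q) = 0
    rw [← hw, ← map_natCast (Ideal.Quotient.mk ((Ideal.span {(p : C)}) ^ (t * q) • ⊤ : Ideal C)) p,
      ← map_pow, ← map_pow, ← map_mul]
    exact (qmk_zero p (t * q) _).mpr ⟨w, by rw [pow_mul]⟩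
  obtain ⟨d, hd⟩ := (qmk_zero p (t * q) _).mp e1
  exact root_closed p hCtf hCtic _ t q hq ⟨d, by rw [hd, pow_mul]⟩

lemma sdiv_base (hp2 : 2 ≤ p) (hCtf : ∀ c : C, (p : C) * c = 0 → c = 0)
    (hCtic : TotallyIntegrallyClosedAwayP p C) (ϖ : ℕ → C)
    (hϖ : ∀ k, ϖ k ^ p ^ k = (p : C))
    (x : AdicCompletion (Ideal.span {(p : C)}) C) (e : ℕ)
    (h : ∀ n, ∃ b, (p : AdicCompletion (Ideal.span {(p : C)}) C) ^ 1 * x ^ n =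
      ((p : AdicCompletion (Ideal.span {(p : C)}) C) ^ e) ^ n * b) :
    ∃ y, x = (p : AdicCompletion (Ideal.span {(p : C)}) C) ^ e * y := by
  have hroots : ∀ k, ∃ u,
      algebraMap C (AdicCompletion (Ideal.span {(p : C)}) C) (ϖ k) * x =
        (p : AdicCompletion (Ideal.span {(p : C)}) C) ^ e * u := by
    intro k
    refine sroot p hCtf hCtic _ e (p ^ k) (Nat.one_le_pow k p (by omega)) ?_
    obtain ⟨b, hb⟩ := h (p ^ k)
    refine ⟨b, ?_⟩
    rw [mul_pow, ← map_pow, hϖ k, map_natCast]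
    simpa using hb
  obtain ⟨f, rfl⟩ := AdicCompletion.mk_surjective _ C x
  refine div_mk p hCtf f e (e + 1) (by omega) (fun j => ?_)
  have hc : ∀ k, ∃ u, ϖ k * f (j + (e + 1)) = (p : C) ^ e * u := by
    intro k
    obtain ⟨u, hu⟩ := hroots k
    obtain ⟨w, hw⟩ := Ideal.Quotient.mk_surjective (u.val e)
    refine (qmk_zero p e _).mp ?_
    have e2 : Ideal.Quotient.mk ((Ideal.span {(p : C)}) ^ e • ⊤ : Ideal C)
        (ϖ k * f (j + (e + 1))) =
        ((algebraMap C (AdicCompletion (Ideal.span {(p : C)}) C) (ϖ k)) *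
          AdicCompletion.mk _ C f).val e := by
      rw [map_mul (Ideal.Quotient.mk ((Ideal.span {(p : C)}) ^ e • ⊤ : Ideal C)),
        qmk_cauchy p f (show e ≤ j + (e + 1) by omega)]
      rfl
    rw [e2, hu]
    show ((p : C ⧸ ((Ideal.span {(p : C)}) ^ e • ⊤ : Ideal C))) ^ e * u.val e = 0
    rw [← hw, ← map_natCast (Ideal.Quotient.mk ((Ideal.span {(p : C)}) ^ e • ⊤ : Ideal C)) p,
      ← map_pow, ← map_mul]
    exact (qmk_zero p e _).mpr ⟨w, rfl⟩
  have hbound := roots_bound p hp2 ϖ hϖ (f (j + (e + 1))) e hc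
  exact tic_div p hCtf hCtic _ e 1 hbound

lemma sdiv (hp2 : 2 ≤ p) (hCtf : ∀ c : C, (p : C) * c = 0 → c = 0)
    (hCtic : TotallyIntegrallyClosedAwayP p C) (ϖ : ℕ → C)
    (hϖ : ∀ k, ϖ k ^ p ^ k = (p : C))
    (x : AdicCompletion (Ideal.span {(p : C)}) C) (e N : ℕ)
    (h : ∀ n, ∃ b, (p : AdicCompletion (Ideal.span {(p : C)}) C) ^ N * x ^ n =
      ((p : AdicCompletion (Ideal.span {(p : C)}) C) ^ e) ^ n * b) :
    ∃ y, x = (p : AdicCompletion (Ideal.span {(p : C)}) C) ^ e * y := by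
  have key : ∀ M (z : AdicCompletion (Ideal.span {(p : C)}) C),
      (∀ n, ∃ b, (p : AdicCompletion (Ideal.span {(p : C)}) C) ^ (M + 1) * z ^ n =
        ((p : AdicCompletion (Ideal.span {(p : C)}) C) ^ e) ^ n * b) →
      ∃ y, z = (p : AdicCompletion (Ideal.span {(p : C)}) C) ^ e * y := by
    intro M
    induction M with
    | zero => exact fun z hz => sdiv_base p hp2 hCtf hCtic ϖ hϖ z e hz
    | succ M ih =>
        intro z hM
        refine ih z (fun n => ?_)
        obtain ⟨b, hb⟩ := hM (2 * n)
        have hsq : ((p : AdicCompletion (Ideal.span {(p : C)}) C) ^ (M + 1) * z ^ n) ^ 2 =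
            ((p : AdicCompletion (Ideal.span {(p : C)}) C) ^ (e * n)) ^ 2 *
              ((p : AdicCompletion (Ideal.span {(p : C)}) C) ^ M * b) := by
          calc ((p : AdicCompletion (Ideal.span {(p : C)}) C) ^ (M + 1) * z ^ n) ^ 2
              = (p : AdicCompletion (Ideal.span {(p : C)}) C) ^ M *
                  ((p : AdicCompletion (Ideal.span {(p : C)}) C) ^ (M + 1 + 1) * z ^ (2 * n)) := by
                ring
            _ = (p : AdicCompletion (Ideal.span {(p : C)}) C) ^ M *
                  (((p : AdicCompletion (Ideal.span {(p : C)}) C) ^ e) ^ (2 * n) * b) := by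
                rw [hb]
            _ = ((p : AdicCompletion (Ideal.span {(p : C)}) C) ^ (e * n)) ^ 2 *
                  ((p : AdicCompletion (Ideal.span {(p : C)}) C) ^ M * b) := by
                rw [← pow_mul, ← pow_mul]
                rw [show e * (2 * n) = e * n * 2 from by ring]
                ring
        obtain ⟨c, hc⟩ := sroot p hCtf hCtic
          ((p : AdicCompletion (Ideal.span {(p : C)}) C) ^ (M + 1) * z ^ n) (e * n) 2 (by omega)
          ⟨(p : AdicCompletion (Ideal.span {(p : C)}) C) ^ M * b, hsq⟩
        exact ⟨c, by rw [hc, pow_mul]⟩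
  refine key N x (fun n => ?_)
  obtain ⟨b, hb⟩ := h n
  refine ⟨(p : AdicCompletion (Ideal.span {(p : C)}) C) * b, ?_⟩
  rw [pow_succ, mul_comm ((p : AdicCompletion (Ideal.span {(p : C)}) C) ^ N)
    (p : AdicCompletion (Ideal.span {(p : C)}) C), mul_assoc, hb]
  ring

lemma stic (hp2 : 2 ≤ p) (hCtf : ∀ c : C, (p : C) * c = 0 → c = 0)
    (hCtic : TotallyIntegrallyClosedAwayP p C) (ϖ : ℕ → C)
    (hϖ : ∀ k, ϖ k ^ p ^ k = (p : C)) :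
    TotallyIntegrallyClosedAwayP p (AdicCompletion (Ideal.span {(p : C)}) C) := by
  intro α hα
  obtain ⟨N, hN⟩ := hα
  obtain ⟨x, e, hxe, hdiv⟩ := lgen1 p (stf p hCtf) α N hN
  obtain ⟨y, hy⟩ := sdiv p hp2 hCtf hCtic ϖ hϖ x e N hdiv
  exact ⟨y, lgen2 p α x y e hxe hy⟩

lemma pi_pow {A : Type*} [CommRing A] (π : ℕ → A) (hπ0 : π 0 = (p : A))
    (hπ : ∀ n, π (n + 1) ^ p = π n) :
    ∀ k, π k ^ p ^ k = (p : A) := by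
  intro k
  induction k with
  | zero => simpa using hπ0
  | succ k ih =>
      have hpk : p ^ (k + 1) = p * p ^ k := by rw [pow_succ]; ring
      rw [hpk, pow_mul, hπ k, ih]

end Stmt16

theorem stmt_16 (p : ℕ) (hp : p.Prime) (hodd : p ≠ 2)
    (A : Type*) [CommRing A]
    (htf : ∀ a : A, (p : A) * a = 0 → a = 0)
    (hsep : ∀ a : A, (∀ n : ℕ, ∃ c : A, a = (p : A) ^ n * c) → a = 0)
    (π : ℕ → A) (hπ0 : π 0 = (p : A)) (hπ : ∀ n, (π (n + 1)) ^ p = π n)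
    (Φ : A →+* A) (hΦπ : ∀ n, Φ (π n) = π n)
    (hΦinj : ∀ a : A, (∃ c, Φ a = (p : A) * c) → ∃ c, a = (p : A) * c)
    (htic : TotallyIntegrallyClosedAwayP p A)
    (C : Type*) [CommRing C] (g : ℕ → (A →+* C))
    (hcomp : ∀ n, (g (n + 1)).comp Φ = g n)
    (hsurj : ∀ x : C, ∃ n a, g n a = x)
    (hker : ∀ n (a : A), g n a = 0 → ∃ m, Φ^[m] a = 0) :
    (∀ x : AdicCompletion (Ideal.span {(p : C)}) C,
      (p : AdicCompletion (Ideal.span {(p : C)}) C) * x = 0 → x = 0) ∧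
    TotallyIntegrallyClosedAwayP p (AdicCompletion (Ideal.span {(p : C)}) C) := by
  have hp2 : 2 ≤ p := hp.two_le
  have hCtf := Stmt16.ctf p Φ g htf hcomp hsurj hker
  have hCtic := Stmt16.ctic p Φ g htf hΦinj hcomp hsurj hker htic
  have hπA : ∀ k, π k ^ p ^ k = (p : A) := Stmt16.pi_pow p π hπ0 hπ
  have hϖ : ∀ k, (g 0 (π k)) ^ p ^ k = (p : C) := by
    intro k
    rw [← map_pow, hπA k, map_natCast]
  exact ⟨Stmt16.stf p hCtf, Stmt16.stic p hp2 hCtf hCtic (fun k => g 0 (π k)) hϖ⟩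
end
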